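/- arXiv:1307.5900 — 11 statements merged into one kernel-verified Lean document; each statement's English description precedes it below -/
import Mathlib

section
/- The maximum diameter of the dual (adjacency) graph among all strongly connected pure (d-1)-dimensional simplicial complexes on n vertices equals the length of the longest induced path in the Johnson graph J(n,d). -/
open Finset

/-- The adjacency (dual) graph of a pure simplicial complex, given by its set of
facets: two facets are adjacent iff they differ in exactly one element. -/
def adjGraph {V : Type*} [DecidableEq V] (C : Finset (Finset V)) :
    SimpleGraph {X // X ∈ C} where
  Adj X Y := (X.1 \ Y.1).card = 1 ∧ (Y.1 \ X.1).card = 1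
  symm := ⟨fun X Y h => ⟨h.2, h.1⟩⟩
  loopless := ⟨fun X h => by simp at h⟩

/-- `Hs n d` : maximum diameter of the adjacency graph among all strongly
connected pure `(d-1)`-dimensional simplicial complexes on `n` vertices. -/
noncomputable def Hs (n d : ℕ) : ℕ :=
  sSup {δ | ∃ C : Finset (Finset (Fin n)),
    (∀ X ∈ C, X.card = d) ∧ (adjGraph C).Connected ∧ (adjGraph C).diam = δ}

/-- The Johnson graph `J(n,d)`: vertices are the `d`-element subsets of `[n]`,
two of them adjacent iff they intersect in `d-1` elements (differ in one element). -/
def johnsonGraph (n d : ℕ) : SimpleGraph {s : Finset (Fin n) // s.card = d} where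
  Adj s t := (s.1 \ t.1).card = 1 ∧ (t.1 \ s.1).card = 1
  symm := ⟨fun s t h => ⟨h.2, h.1⟩⟩
  loopless := ⟨fun s h => by simp at h⟩

/-- `p : Fin (N+1) → V` is an induced path of length `N` in `G`. -/
def IsInducedPath {V : Type*} (G : SimpleGraph V) {N : ℕ} (p : Fin (N + 1) → V) : Prop :=
  Function.Injective p ∧
    ∀ i j : Fin (N + 1), G.Adj (p i) (p j) ↔ (i.val + 1 = j.val ∨ j.val + 1 = i.val)

/-! A shortest walk between two facets at maximal distance is an induced path in `J(n,d)`: a chord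
would shortcut it. Conversely, the facets along an induced path of length `N` form a complex whose
adjacency graph is isomorphic to the path graph on `N + 1` vertices, whose diameter is `N`. -/

open SimpleGraph

namespace SimpleGraph

variable {V W : Type*} {G : SimpleGraph V} {H : SimpleGraph W} {u v : V}

lemma Hom.edist_le (f : G →g H) (u v : V) : H.edist (f u) (f v) ≤ G.edist u v := by
  by_cases h : G.Reachable u v
  · obtain ⟨w, hw⟩ := h.exists_walk_length_eq_edist
    rw [← hw, ← w.length_map f]
    exact (w.map f).edist_le
  · rw [edist_eq_top_of_not_reachable h]
    exact le_top

lemma Iso.edist_eq (e : G ≃g H) (u v : V) : H.edist (e u) (e v) = G.edist u v :=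
  le_antisymm (e.toHom.edist_le u v) (by simpa using e.symm.toHom.edist_le (e u) (e v))

lemma Iso.diam_eq (e : G ≃g H) : G.diam = H.diam := by
  rw [diam, diam, ediam_def, ediam_def, ← (e.toEquiv.prodCongr e.toEquiv).iSup_comp]
  simp [e.edist_eq]

lemma Walk.abs_sub_le_length (f : V → ℤ) (hf : ∀ x y, G.Adj x y → |f x - f y| ≤ 1)
    (w : G.Walk u v) : |f u - f v| ≤ w.length := by
  induction w with
  | nil => simp
  | @cons x y z h w ih =>
    calc |f x - f z| ≤ |f x - f y| + |f y - f z| := abs_sub_le _ _ _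
      _ ≤ 1 + w.length := add_le_add (hf _ _ h) ih
      _ = (w.cons h).length := by push_cast [Walk.length_cons]; ring

lemma Walk.dist_getVert_getVert_of_length_eq_dist {w : G.Walk u v}
    (hw : w.length = G.dist u v) {i j : ℕ} (hij : i ≤ j) (hj : j ≤ w.length) :
    G.dist (w.getVert i) (w.getVert j) = j - i := by
  have h := length_eq_dist_of_subwalk hw
    (((w.drop i).isSubwalk_take (j - i)).trans (w.isSubwalk_drop i))
  rw [Walk.take_length, Walk.drop_length, Walk.drop_getVert, Nat.add_sub_cancel' hij] at h
  omega

lemma pathGraph_dist_of_le {n : ℕ} {i j : Fin n} (hij : i ≤ j) :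
    (pathGraph n).dist i j = j - i := by
  apply le_antisymm
  · suffices ∀ k (j : Fin n), (i : ℕ) + k = j → (pathGraph n).dist i j ≤ k from
      this _ j (by omega)
    intro k
    induction k with
    | zero =>
      intro j hj
      obtain rfl : i = j := Fin.ext (by omega)
      simp
    | succ k ih =>
      intro j hj
      have hadj : (pathGraph n).Adj ⟨i + k, by omega⟩ j :=
        pathGraph_adj.mpr (.inl (by simp; omega))
      have := hadj.reachable.dist_triangle_right i
      rw [dist_eq_one_iff_adj.mpr hadj] at this
      have := ih ⟨i + k, by omega⟩ rfl
      omega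
  · obtain ⟨w, hw⟩ := (pathGraph_preconnected n i j).exists_walk_length_eq_dist
    have hval : ∀ x y, (pathGraph n).Adj x y → |(x : ℤ) - y| ≤ 1 := fun x y h => by
      rw [abs_le]; rcases pathGraph_adj.mp h with h | h <;> constructor <;> omega
    have := w.abs_sub_le_length _ hval
    rw [hw, abs_le] at this
    omega

lemma diam_pathGraph (N : ℕ) : (pathGraph (N + 1)).diam = N := by
  apply le_antisymm
  · obtain ⟨i, j, hij⟩ := (pathGraph (N + 1)).exists_dist_eq_diam
    rw [← hij]
    rcases le_total i j with h | h
    · rw [pathGraph_dist_of_le h]; omega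
    · rw [dist_comm, pathGraph_dist_of_le h]; omega
  · have := dist_le_diam (connected_iff_ediam_ne_top.mp (pathGraph_connected N))
      (u := 0) (v := Fin.last N)
    rwa [pathGraph_dist_of_le (Fin.zero_le _), Fin.val_last, Fin.val_zero, Nat.sub_zero] at this

end SimpleGraph

section InducedPath

variable {V W : Type*} {G : SimpleGraph V} {H : SimpleGraph W} {N : ℕ} {p : Fin (N + 1) → V}

lemma IsInducedPath.map (hp : IsInducedPath G p) (f : G ↪g H) : IsInducedPath H (f ∘ p) :=
  ⟨f.injective.comp hp.1, fun i j => f.map_adj_iff.trans (hp.2 i j)⟩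

lemma isInducedPath_of_dist_eq (h : ∀ i j, i ≤ j → G.dist (p i) (p j) = j - i) :
    IsInducedPath G p := by
  have hdist : ∀ i j, G.dist (p i) (p j) = (j - i : ℕ) + (i - j : ℕ) := fun i j => by
    rcases le_total i j with hij | hij
    · rw [h i j hij]; omega
    · rw [dist_comm, h j i hij]; omega
  refine ⟨fun i j hij => ?_, fun i j => ?_⟩
  · have := hdist i j
    rw [hij, dist_self] at this
    exact Fin.ext (by omega)
  · rw [← dist_eq_one_iff_adj, hdist]
    omega

lemma SimpleGraph.Reachable.exists_isInducedPath {u v : V} (h : G.Reachable u v) :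
    ∃ p : Fin (G.dist u v + 1) → V, IsInducedPath G p := by
  obtain ⟨w, hw⟩ := h.exists_walk_length_eq_dist
  refine ⟨fun i => w.getVert i, isInducedPath_of_dist_eq fun i j hij => ?_⟩
  exact w.dist_getVert_getVert_of_length_eq_dist hw hij (by omega)

lemma SimpleGraph.Connected.exists_isInducedPath_diam [Finite V] (h : G.Connected) :
    ∃ p : Fin (G.diam + 1) → V, IsInducedPath G p := by
  have := h.nonempty
  obtain ⟨u, v, huv⟩ := G.exists_dist_eq_diam
  rw [← huv]
  exact (h u v).exists_isInducedPath

end InducedPath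

def adjGraphEmbeddingJohnson {n d : ℕ} {C : Finset (Finset (Fin n))}
    (hC : ∀ X ∈ C, X.card = d) : adjGraph C ↪g johnsonGraph n d where
  toFun X := ⟨X.1, hC X.1 X.2⟩
  inj' _ _ h := Subtype.ext (Subtype.mk.inj h)
  map_rel_iff' := Iff.rfl

noncomputable def IsInducedPath.isoAdjGraphImage {n d N : ℕ}
    {p : Fin (N + 1) → {s : Finset (Fin n) // s.card = d}}
    (hp : IsInducedPath (johnsonGraph n d) p) :
    pathGraph (N + 1) ≃g adjGraph (univ.image fun i => (p i).1) where
  toEquiv := Equiv.ofBijective (fun i => ⟨(p i).1, mem_image_of_mem _ (mem_univ i)⟩)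
    ⟨fun i j hij => hp.1 (Subtype.ext (Subtype.mk.inj hij)), fun X => by
      obtain ⟨i, -, hi⟩ := mem_image.mp X.2
      exact ⟨i, Subtype.ext hi⟩⟩
  map_rel_iff' := (hp.2 _ _).trans pathGraph_adj.symm

/-- The maximum diameter of the dual (adjacency) graph among all strongly connected
pure `(d-1)`-dimensional simplicial complexes on `n` vertices equals the length of
the longest induced path in the Johnson graph `J(n,d)`. -/
theorem Hs_eq_longest_induced_path_johnson (n d : ℕ) :
    Hs n d = sSup {N | ∃ p : Fin (N + 1) → {s : Finset (Fin n) // s.card = d},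
      IsInducedPath (johnsonGraph n d) p} := by
  unfold Hs
  congr 1
  ext N
  constructor
  · rintro ⟨C, hC, hconn, rfl⟩
    obtain ⟨p, hp⟩ := hconn.exists_isInducedPath_diam
    exact ⟨_, hp.map (adjGraphEmbeddingJohnson hC)⟩
  · rintro ⟨p, hp⟩
    have e := hp.isoAdjGraphImage
    refine ⟨_, ?_, e.connected_iff.mp (pathGraph_connected N), ?_⟩
    · simpa using fun i => (p i).2
    · rw [← e.diam_eq, diam_pathGraph]
end

section
/- For every n ≥ 4 with n ≡ 1 (mod 3), say n = 3k+1, there exists a pure 2-dimensional simplicial complex on n vertices whose adjacency graph is a path of length at least 2k² + k − 2. In particular H_s(n,3) ≥ (2/9)(n−3)² for all n ≥ 3, where H_s(n,3) is the maximum adjacency-graph diameter of strongly connected pure 2-complexes on n vertices. -/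
/-!
Take vertices `y_0, …, y_{2k-1}, ∞` and `x_0, …, x_{k-1}`. Walecki's construction splits the
complete graph on the `y_t` and `∞` into `k` Hamiltonian paths, the `q`-th one running from `y_q`
to `y_{q+1}`. Coning the `q`-th path from `x_q` gives a fan of `2k` triangles, and the triangle
`x_q x_{q+1} y_{q+1}` glues the end of the `q`-th fan to the start of the next one: this is a
sequence of `k(2k+1) - 1` triangles in which consecutive ones share an edge. No other two share an
edge: an edge `x_q v` lies only in the fan of `x_q`, where `v` occurs once on the path, and an edge
avoiding the `x`'s lies on exactly one Walecki path. So the adjacency graph is a path of length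
`2k² + k - 2`, and embedding it into larger vertex sets gives the bound on `H_s(n, 3)`.
-/

open Finset

lemma SimpleGraph.Walk.le_add_length {V : Type*} {G : SimpleGraph V} (f : V → ℕ)
    (hf : ∀ a b, G.Adj a b → f b ≤ f a + 1) {u v : V} (p : G.Walk u v) :
    f v ≤ f u + p.length := by
  induction p with
  | nil => simp
  | cons h _ ih =>
    have := hf _ _ h
    rw [SimpleGraph.Walk.length_cons]
    omega

section FacetPath

variable {V W : Type*} [DecidableEq V] [DecidableEq W]

def IsFacetPath (d : ℕ) {N : ℕ} (X : Fin (N + 1) → Finset V) : Prop :=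
  Function.Injective X ∧ (∀ i, (X i).card = d) ∧
    ∀ i j, ((X i \ X j).card = 1 ∧ (X j \ X i).card = 1) ↔ (i.val + 1 = j.val ∨ j.val + 1 = i.val)

lemma card_sdiff_eq_one_iff_card_inter {A B : Finset V} {d : ℕ} (hA : A.card = d + 1)
    (hB : B.card = d + 1) : ((A \ B).card = 1 ∧ (B \ A).card = 1) ↔ (A ∩ B).card = d := by
  have hAB := card_sdiff_add_card_inter A B
  have hBA := card_sdiff_add_card_inter B A
  rw [inter_comm] at hBA
  omega

lemma isFacetPath_of_card_inter {d N : ℕ} (T : ℕ → Finset V)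
    (hcard : ∀ m ≤ N, (T m).card = d + 1)
    (hsucc : ∀ m < N, (T m ∩ T (m + 1)).card = d)
    (hfar : ∀ m m', m + 2 ≤ m' → m' ≤ N → (T m ∩ T m').card < d) :
    IsFacetPath (d + 1) (fun i : Fin (N + 1) => T i) := by
  have hordered : ∀ m m', m < m' → m' ≤ N →
      (T m ∩ T m').card ≤ d ∧ ((T m ∩ T m').card = d ↔ m + 1 = m') := by
    intro m m' hlt hm'
    rcases (by omega : m + 1 = m' ∨ m + 2 ≤ m') with rfl | hf
    · simp [hsucc m (by omega)]
    · have := hfar m m' hf hm'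
      omega
  have hpair : ∀ i j : Fin (N + 1), i ≠ j →
      (T i ∩ T j).card ≤ d ∧ ((T i ∩ T j).card = d ↔ (i.val + 1 = j.val ∨ j.val + 1 = i.val)) := by
    intro i j hij
    rcases lt_or_gt_of_ne (Fin.val_ne_of_ne hij) with h | h
    · have := hordered i j h (by omega)
      omega
    · have := hordered j i h (by omega)
      rw [inter_comm]
      omega
  refine ⟨fun i j hij => ?_, fun i => hcard i (by omega), fun i j => ?_⟩
  · by_contra h
    have := (hpair i j h).1
    simp only [hij, inter_self, hcard j (by omega)] at this
    omega
  · rw [card_sdiff_eq_one_iff_card_inter (hcard i (by omega)) (hcard j (by omega))]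
    by_cases h : i = j
    · subst h
      simp only [inter_self, hcard i (by omega)]
      omega
    · exact (hpair i j h).2

lemma IsFacetPath.map {d N : ℕ} {X : Fin (N + 1) → Finset V} (hX : IsFacetPath d X)
    {f : V → W} (hf : Function.Injective f) : IsFacetPath d (fun i => (X i).image f) := by
  obtain ⟨hinj, hcard, hadj⟩ := hX
  refine ⟨fun i j hij => hinj (image_injective hf hij), fun i => ?_, fun i j => ?_⟩
  · rw [card_image_of_injective _ hf, hcard]
  · rw [← image_sdiff _ _ hf, ← image_sdiff _ _ hf,
      card_image_of_injective _ hf, card_image_of_injective _ hf, hadj]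

lemma IsFacetPath.le_Hs {n d N : ℕ} {X : Fin (N + 1) → Finset (Fin n)}
    (hX : IsFacetPath d X) : N ≤ Hs n d := by
  set C := univ.image X
  have hsurj : Function.Surjective fun i => (⟨X i, mem_image_of_mem _ (mem_univ i)⟩ : C) := by
    rintro ⟨Y, hY⟩
    obtain ⟨i, -, rfl⟩ := mem_image.mp hY
    exact ⟨i, rfl⟩
  let φ : SimpleGraph.pathGraph (N + 1) ≃g adjGraph C :=
    ⟨Equiv.ofBijective _ ⟨fun i j h => hX.1 (congrArg Subtype.val h), hsurj⟩,
      fun {i j} => (hX.2.2 i j).trans SimpleGraph.pathGraph_adj.symm⟩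
  have hconn : (adjGraph C).Connected := φ.connected_iff.mp (SimpleGraph.pathGraph_connected N)
  have : Nonempty C := hconn.nonempty
  have hdist : N ≤ (adjGraph C).dist (φ 0) (φ (Fin.last N)) := by
    obtain ⟨p, hp⟩ := (hconn.preconnected (φ 0) (φ (Fin.last N))).exists_walk_length_eq_dist
    have := p.le_add_length (fun Y => (φ.symm Y).val) fun a b hab => by
      have := SimpleGraph.pathGraph_adj.mp (φ.symm.map_adj_iff.mpr hab)
      omega
    simp only [RelIso.symm_apply_apply, Fin.val_zero, Fin.val_last] at this
    omega
  have hbdd : BddAbove {δ | ∃ C : Finset (Finset (Fin n)),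
      (∀ X ∈ C, X.card = d) ∧ (adjGraph C).Connected ∧ (adjGraph C).diam = δ} :=
    ((Set.finite_range fun C : Finset (Finset (Fin n)) => (adjGraph C).diam).subset
      (by rintro _ ⟨C, -, -, rfl⟩; exact ⟨C, rfl⟩)).bddAbove
  have hC : ∀ Y ∈ C, Y.card = d := by
    intro Y hY
    obtain ⟨i, -, rfl⟩ := mem_image.mp hY
    exact hX.2.1 i
  calc N ≤ (adjGraph C).dist (φ 0) (φ (Fin.last N)) := hdist
    _ ≤ (adjGraph C).diam :=
      SimpleGraph.dist_le_diam (SimpleGraph.connected_iff_ediam_ne_top.mp hconn)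
    _ ≤ Hs n d := le_csSup hbdd ⟨C, hC, hconn, rfl⟩

lemma card_inter_eq_two {A B : Finset V} (hA : A.card = 3) {a b c : V} (hab : a ≠ b)
    (ha : a ∈ A ∩ B) (hb : b ∈ A ∩ B) (hc : c ∈ A) (hcB : c ∉ B) : (A ∩ B).card = 2 := by
  have hlt : (A ∩ B).card < A.card :=
    card_lt_card ⟨inter_subset_left, fun h => hcB (mem_inter.mp (h hc)).2⟩
  have hge : ({a, b} : Finset V).card ≤ (A ∩ B).card :=
    card_le_card (insert_subset ha (singleton_subset_iff.mpr hb))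
  rw [card_pair hab] at hge
  omega

lemma card_triple_inter_le_one {a b c : V} {B : Finset V} (hab : a ∈ B → b ∉ B)
    (hac : a ∈ B → c ∉ B) (hbc : b ∈ B → c ∉ B) : ({a, b, c} ∩ B).card ≤ 1 := by
  refine card_le_one.mpr fun u hu v hv => ?_
  simp only [mem_inter, mem_insert, mem_singleton] at hu hv
  obtain ⟨hu | hu | hu, huB⟩ := hu <;> obtain ⟨hv | hv | hv, hvB⟩ := hv <;> subst hu hv <;>
    tauto

end FacetPath

namespace WaleckiStrip

def xVert (k i : ℕ) : Fin (3 * k + 1) := ⟨(2 * k + 1 + i) % (3 * k + 1), Nat.mod_lt _ (by omega)⟩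

-- Indices of `y`-vertices are read mod `2k`; the outer reduction only makes the definition total.
def yVert (k t : ℕ) : Fin (3 * k + 1) := ⟨t % (2 * k) % (3 * k + 1), Nat.mod_lt _ (by omega)⟩

def infVert (k : ℕ) : Fin (3 * k + 1) := ⟨2 * k, by omega⟩

-- The `q`-th Walecki path visits `y_q, ∞, y_{q+k}, y_{q+k+1}, y_{q+k-1}, y_{q+k+2}, …, y_{q+1}`;
-- `zigzag k s` is the offset of its `s`-th vertex (`s ≠ 1`).
def zigzag (k s : ℕ) : ℕ := if s = 0 then 0 else if s % 2 = 0 then k + 1 - s / 2 else k + s / 2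

def walecki (k q s : ℕ) : Fin (3 * k + 1) :=
  if s = 1 then infVert k else yVert k (q + zigzag k s)

variable {k q q' r r' s s' : ℕ}

lemma xVert_val {i : ℕ} (hi : i < k) : (xVert k i).val = 2 * k + 1 + i :=
  Nat.mod_eq_of_lt (by omega)

lemma yVert_val (hk : 0 < k) (t : ℕ) : (yVert k t).val = t % (2 * k) :=
  Nat.mod_eq_of_lt (by have := Nat.mod_lt t (by omega : 0 < 2 * k); omega)

lemma xVert_inj {i j : ℕ} (hi : i < k) (hj : j < k) : xVert k i = xVert k j ↔ i = j := by
  rw [Fin.ext_iff, xVert_val hi, xVert_val hj]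
  omega

lemma xVert_ne_yVert (hk : 0 < k) {i : ℕ} (hi : i < k) (t : ℕ) : xVert k i ≠ yVert k t := by
  rw [Ne, Fin.ext_iff, xVert_val hi, yVert_val hk]
  have := Nat.mod_lt t (by omega : 0 < 2 * k)
  omega

lemma infVert_val : (infVert k).val = 2 * k := rfl

lemma xVert_ne_infVert {i : ℕ} (hi : i < k) : xVert k i ≠ infVert k := by
  rw [Ne, Fin.ext_iff, xVert_val hi, infVert_val]
  omega

lemma yVert_ne_infVert (hk : 0 < k) (t : ℕ) : yVert k t ≠ infVert k := by
  rw [Ne, Fin.ext_iff, yVert_val hk, infVert_val]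
  have := Nat.mod_lt t (by omega : 0 < 2 * k)
  omega

lemma yVert_inj (hk : 0 < k) {a b c : ℕ} (ha : c ≤ a) (ha' : a < c + 2 * k) (hb : c ≤ b)
    (hb' : b < c + 2 * k) : yVert k a = yVert k b ↔ a = b := by
  refine ⟨fun h => ?_, congrArg _⟩
  have hab : a ≡ b [MOD 2 * k] := by
    rwa [Fin.ext_iff, yVert_val hk, yVert_val hk] at h
  exact le_antisymm (hab.le_of_lt_add (by omega)) (hab.symm.le_of_lt_add (by omega))

lemma xVert_ne_walecki (hk : 0 < k) {i : ℕ} (hi : i < k) (q s : ℕ) :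
    xVert k i ≠ walecki k q s := by
  unfold walecki
  split
  · exact xVert_ne_infVert hi
  · exact xVert_ne_yVert hk hi _

lemma zigzag_lt (hk : 0 < k) (hs : s ≤ 2 * k) : zigzag k s < 2 * k := by
  unfold zigzag
  split_ifs <;> omega

lemma zigzag_injOn (hs : s ≤ 2 * k) (hs' : s' ≤ 2 * k) (h1 : s ≠ 1) (h1' : s' ≠ 1)
    (h : zigzag k s = zigzag k s') : s = s' := by
  unfold zigzag at h
  split_ifs at h <;> omega

lemma zigzag_add_succ (h2 : 2 ≤ s) (hs : s < 2 * k) :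
    2 * k ≤ zigzag k s + zigzag k (s + 1) ∧ zigzag k s + zigzag k (s + 1) ≤ 2 * k + 1 := by
  unfold zigzag
  split_ifs <;> first | contradiction | omega

lemma walecki_zero (q : ℕ) : walecki k q 0 = yVert k q := by
  simp [walecki, zigzag]

lemma walecki_two_mul (hk : 0 < k) (q : ℕ) : walecki k q (2 * k) = yVert k (q + 1) := by
  rw [walecki, if_neg (by omega), zigzag, if_neg (by omega), if_pos (by omega)]
  congr 2
  omega

lemma walecki_inj (hk : 0 < k) (hs : s ≤ 2 * k) (hs' : s' ≤ 2 * k) :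
    walecki k q s = walecki k q s' ↔ s = s' := by
  refine ⟨fun h => ?_, congrArg _⟩
  unfold walecki at h
  by_cases h1 : s = 1 <;> by_cases h1' : s' = 1 <;> simp only [h1, h1', if_true, if_false] at h
  · omega
  · exact absurd h.symm (yVert_ne_infVert hk _)
  · exact absurd h (yVert_ne_infVert hk _)
  · have := zigzag_lt hk hs
    have := zigzag_lt hk hs'
    rw [yVert_inj hk (c := q) (by omega) (by omega) (by omega) (by omega)] at h
    exact zigzag_injOn hs hs' h1 h1' (by omega)

-- The Walecki path through an edge: `∞ y_t` lies on path `t mod k`, and `y_a y_b` on path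
-- `⌊(a + b mod 2k) / 2⌋`.
def edgeLabel (k : ℕ) : Sym2 (Fin (3 * k + 1)) → ℕ :=
  Sym2.lift ⟨fun u v => if u = infVert k then v % k else if v = infVert k then u % k
      else (u + v : ℕ) % (2 * k) / 2,
    fun u v => by dsimp only; split_ifs <;> simp_all [add_comm]⟩

lemma edgeLabel_walecki (hk : 0 < k) (hq : q < k) (hs : s < 2 * k) :
    edgeLabel k s(walecki k q s, walecki k q (s + 1)) = q := by
  rcases (by omega : s = 0 ∨ s = 1 ∨ 2 ≤ s) with rfl | rfl | h2
  · simp [edgeLabel, walecki, zigzag, yVert_ne_infVert hk, yVert_val hk,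
      Nat.mod_eq_of_lt (by omega : q < 2 * k), Nat.mod_eq_of_lt hq]
  · have hz : zigzag k 2 = k := by simp [zigzag]
    simp [edgeLabel, walecki, hz, yVert_val hk,
      Nat.mod_eq_of_lt (by omega : q + k < 2 * k), Nat.mod_eq_of_lt hq]
  · obtain ⟨hlo, hhi⟩ := zigzag_add_succ (k := k) h2 hs
    obtain ⟨ε, hε, hsum⟩ : ∃ ε ≤ 1, zigzag k s + zigzag k (s + 1) = ε + 2 * k :=
      ⟨zigzag k s + zigzag k (s + 1) - 2 * k, by omega, by omega⟩
    have hmod : (q + zigzag k s + (q + zigzag k (s + 1))) % (2 * k) = 2 * q + ε := by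
      rw [show q + zigzag k s + (q + zigzag k (s + 1)) = 2 * q + ε + 2 * k by omega,
        Nat.add_mod_right, Nat.mod_eq_of_lt (by omega)]
    simp only [edgeLabel, walecki, if_neg (by omega : s ≠ 1), if_neg (by omega : s + 1 ≠ 1),
      Sym2.lift_mk, yVert_ne_infVert hk, if_false, yVert_val hk, ← Nat.add_mod, hmod]
    omega

lemma walecki_edge_injective (hk : 0 < k) (hq : q < k) (hq' : q' < k) (hs : s < 2 * k)
    (hs' : s' < 2 * k)
    (h : s(walecki k q s, walecki k q (s + 1)) = s(walecki k q' s', walecki k q' (s' + 1))) :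
    q = q' := by
  rw [← edgeLabel_walecki hk hq hs, h, edgeLabel_walecki hk hq' hs']

def fan (k q r : ℕ) : Finset (Fin (3 * k + 1)) :=
  {xVert k q, walecki k q r, walecki k q (r + 1)}

def bridge (k q : ℕ) : Finset (Fin (3 * k + 1)) :=
  {xVert k q, xVert k (q + 1), yVert k (q + 1)}

lemma xVert_mem_fan_iff (hk : 0 < k) {i : ℕ} (hi : i < k) (hq : q < k) :
    xVert k i ∈ fan k q r ↔ i = q := by
  simp [fan, xVert_inj hi hq, xVert_ne_walecki hk hi]

lemma walecki_mem_fan_iff (hk : 0 < k) (hq : q < k) (hs : s ≤ 2 * k) (hr : r < 2 * k) :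
    walecki k q s ∈ fan k q r ↔ s = r ∨ s = r + 1 := by
  simp [fan, (xVert_ne_walecki hk hq _ _).symm, walecki_inj hk hs (by omega : r ≤ 2 * k),
    walecki_inj hk hs (by omega : r + 1 ≤ 2 * k)]

lemma walecki_mem_fan_iff_mem_edge (hk : 0 < k) (hq' : q' < k) :
    walecki k q s ∈ fan k q' r' ↔ walecki k q s ∈ s(walecki k q' r', walecki k q' (r' + 1)) := by
  simp [fan, (xVert_ne_walecki hk hq' _ _).symm]

lemma xVert_mem_bridge_iff {i : ℕ} (hk : 0 < k) (hi : i < k) (hq : q + 1 < k) :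
    xVert k i ∈ bridge k q ↔ i = q ∨ i = q + 1 := by
  simp [bridge, xVert_inj hi (by omega : q < k), xVert_inj hi hq, xVert_ne_yVert hk hi]

lemma walecki_mem_bridge_iff (hk : 0 < k) (hq : q + 1 < k) :
    walecki k q' s ∈ bridge k q ↔ walecki k q' s = yVert k (q + 1) := by
  simp [bridge, (xVert_ne_walecki hk (by omega : q < k) _ _).symm,
    (xVert_ne_walecki hk hq _ _).symm]

lemma card_fan (hk : 0 < k) (hq : q < k) (hr : r < 2 * k) : (fan k q r).card = 3 :=
  card_eq_three.mpr ⟨_, _, _, xVert_ne_walecki hk hq _ _, xVert_ne_walecki hk hq _ _,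
    by rw [Ne, walecki_inj hk (by omega) (by omega)]; omega, rfl⟩

lemma card_bridge (hk : 0 < k) (hq : q + 1 < k) : (bridge k q).card = 3 :=
  card_eq_three.mpr ⟨_, _, _, by rw [Ne, xVert_inj (by omega) hq]; omega,
    xVert_ne_yVert hk (by omega) _, xVert_ne_yVert hk hq _, rfl⟩

lemma card_fan_inter_fan_succ (hk : 0 < k) (hq : q < k) (hr : r + 1 < 2 * k) :
    (fan k q r ∩ fan k q (r + 1)).card = 2 :=
  card_inter_eq_two (b := walecki k q (r + 1)) (c := walecki k q r) (card_fan hk hq (by omega))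
    (xVert_ne_walecki hk hq _ _)
    (by simp [fan]) (by simp [fan]) (by simp [fan])
    (by rw [walecki_mem_fan_iff hk hq (by omega) hr]; omega)

lemma card_fan_inter_bridge (hk : 0 < k) (hq : q + 1 < k) (hr : r + 1 = 2 * k) :
    (fan k q r ∩ bridge k q).card = 2 := by
  have hlast : walecki k q (r + 1) = yVert k (q + 1) := by rw [hr, walecki_two_mul hk]
  refine card_inter_eq_two (a := xVert k q) (b := yVert k (q + 1)) (c := walecki k q r)
    (card_fan hk (by omega) (by omega)) (xVert_ne_yVert hk (by omega) _)
    (by simp [fan, bridge]) (by simp [fan, bridge, hlast]) (by simp [fan]) ?_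
  rw [walecki_mem_bridge_iff hk hq, ← hlast, walecki_inj hk (by omega) (by omega)]
  omega

lemma card_bridge_inter_fan_zero (hk : 0 < k) (hq : q + 1 < k) :
    (bridge k q ∩ fan k (q + 1) 0).card = 2 := by
  refine card_inter_eq_two (a := xVert k (q + 1)) (b := yVert k (q + 1)) (c := xVert k q)
    (card_bridge hk hq) (xVert_ne_yVert hk hq _)
    (by simp [fan, bridge]) (by simp [fan, bridge, walecki_zero]) (by simp [bridge]) ?_
  rw [xVert_mem_fan_iff hk (by omega) hq]
  omega

lemma card_fan_inter_fan_le_one (hk : 0 < k) (hq : q < k) (hr : r + 2 ≤ r') (hr' : r' < 2 * k) :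
    (fan k q r ∩ fan k q r').card ≤ 1 := by
  have hb : walecki k q r ∉ fan k q r' := by
    rw [walecki_mem_fan_iff hk hq (by omega) hr']
    omega
  have hc : walecki k q (r + 1) ∉ fan k q r' := by
    rw [walecki_mem_fan_iff hk hq (by omega) hr']
    omega
  exact card_triple_inter_le_one (fun _ => hb) (fun _ => hc) (fun h => absurd h hb)

lemma card_fan_inter_fan_le_one_of_ne (hk : 0 < k) (hq : q < k) (hq' : q' < k) (hne : q ≠ q')
    (hr : r < 2 * k) (hr' : r' < 2 * k) : (fan k q r ∩ fan k q' r').card ≤ 1 := by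
  have ha : xVert k q ∉ fan k q' r' := by rwa [xVert_mem_fan_iff hk hq hq']
  refine card_triple_inter_le_one (fun h => absurd h ha) (fun h => absurd h ha) fun hb hc => hne ?_
  rw [walecki_mem_fan_iff_mem_edge hk hq'] at hb hc
  have hwne : walecki k q r ≠ walecki k q (r + 1) := by
    rw [Ne, walecki_inj hk (by omega) (by omega)]
    omega
  exact walecki_edge_injective hk hq hq' hr hr' ((Sym2.mem_and_mem_iff hwne).mp ⟨hb, hc⟩).symm

lemma card_bridge_inter_fan_le_one (hk : 0 < k) (hlt : q < q') (hq' : q' < k) (hr' : r' < 2 * k)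
    (hstart : q + 1 = q' → 0 < r') : (bridge k q ∩ fan k q' r').card ≤ 1 := by
  have ha : xVert k q ∉ fan k q' r' := by
    rw [xVert_mem_fan_iff hk (by omega) hq']
    omega
  refine card_triple_inter_le_one (fun h => absurd h ha) (fun h => absurd h ha) fun hb => ?_
  obtain rfl := (xVert_mem_fan_iff hk (by omega) hq').mp hb
  rw [← walecki_zero, walecki_mem_fan_iff hk hq' (by omega) hr']
  have := hstart rfl
  omega

lemma card_fan_inter_bridge_le_one (hk : 0 < k) (hle : q ≤ q') (hq' : q' + 1 < k)
    (hr : r < 2 * k) (hlast : q = q' → r + 1 < 2 * k) : (fan k q r ∩ bridge k q').card ≤ 1 := by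
  rcases hle.eq_or_lt with rfl | hlt
  · have hlast := hlast rfl
    have hb : walecki k q r ∉ bridge k q := by
      rw [walecki_mem_bridge_iff hk hq', ← walecki_two_mul hk, walecki_inj hk (by omega) le_rfl]
      omega
    have hc : walecki k q (r + 1) ∉ bridge k q := by
      rw [walecki_mem_bridge_iff hk hq', ← walecki_two_mul hk, walecki_inj hk (by omega) le_rfl]
      omega
    exact card_triple_inter_le_one (fun _ => hb) (fun _ => hc) (fun h => absurd h hb)
  · have ha : xVert k q ∉ bridge k q' := by
      rw [xVert_mem_bridge_iff hk (by omega) hq']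
      omega
    refine card_triple_inter_le_one (fun h => absurd h ha) (fun h => absurd h ha) fun hb hc => ?_
    rw [walecki_mem_bridge_iff hk hq'] at hb hc
    rw [← hc, walecki_inj hk (by omega) (by omega)] at hb
    omega

lemma card_bridge_inter_bridge_le_one (hk : 0 < k) (hlt : q < q') (hq' : q' + 1 < k) :
    (bridge k q ∩ bridge k q').card ≤ 1 := by
  have ha : xVert k q ∉ bridge k q' := by
    rw [xVert_mem_bridge_iff hk (by omega) hq']
    omega
  have hc : yVert k (q + 1) ∉ bridge k q' := by
    simp only [bridge, mem_insert, mem_singleton, (xVert_ne_yVert hk (by omega : q' < k) _).symm,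
      (xVert_ne_yVert hk hq' _).symm,
      yVert_inj hk (a := q + 1) (b := q' + 1) (c := 0) (by omega) (by omega) (by omega) (by omega),
      false_or]
    omega
  exact card_triple_inter_le_one (fun h => absurd h ha) (fun h => absurd h ha) (fun _ => hc)

-- Row `q` of the strip: the `2k` triangles of the fan at `x_q`, then the bridge to row `q + 1`.
def cell (k q r : ℕ) : Finset (Fin (3 * k + 1)) := if r < 2 * k then fan k q r else bridge k q

lemma card_cell (hk : 0 < k) (hq : q < k) (hr : r ≤ 2 * k) (hbridge : r = 2 * k → q + 1 < k) :
    (cell k q r).card = 3 := by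
  unfold cell
  split_ifs with h
  · exact card_fan hk hq h
  · exact card_bridge hk (hbridge (by omega))

lemma card_cell_inter_cell_le_one (hk : 0 < k) (hq' : q' < k) (hr : r ≤ 2 * k) (hr' : r' ≤ 2 * k)
    (hbridge' : r' = 2 * k → q' + 1 < k)
    (hfar : q = q' ∧ r + 2 ≤ r' ∨ q < q' ∧ (q + 1 = q' → r = 2 * k → 0 < r')) :
    (cell k q r ∩ cell k q' r').card ≤ 1 := by
  unfold cell
  by_cases h : r < 2 * k <;> by_cases h' : r' < 2 * k <;> simp only [h, h', if_true, if_false]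
  · rcases hfar with ⟨rfl, hrr⟩ | ⟨hlt, -⟩
    · exact card_fan_inter_fan_le_one hk hq' hrr h'
    · exact card_fan_inter_fan_le_one_of_ne hk (by omega) hq' (by omega) h h'
  · exact card_fan_inter_bridge_le_one hk (by omega) (hbridge' (by omega)) h (by omega)
  · exact card_bridge_inter_fan_le_one hk (by omega) hq' h' fun h1 => by omega
  · exact card_bridge_inter_bridge_le_one hk (by omega) (hbridge' (by omega))

def strip (k m : ℕ) : Finset (Fin (3 * k + 1)) := cell k (m / (2 * k + 1)) (m % (2 * k + 1))

lemma strip_row_lt (hk : 0 < k) {m : ℕ} (hm : m ≤ 2 * k ^ 2 + k - 2) :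
    m / (2 * k + 1) < k ∧ (m % (2 * k + 1) = 2 * k → m / (2 * k + 1) + 1 < k) := by
  have hdm := Nat.div_add_mod m (2 * k + 1)
  have hsq : (2 * k + 1) * k = 2 * k ^ 2 + k := by ring
  constructor
  · by_contra! h
    have := Nat.mul_le_mul_left (2 * k + 1) h
    omega
  · intro hr
    by_contra! h
    have := Nat.mul_le_mul_left (2 * k + 1) h
    rw [mul_add] at this
    omega

lemma card_strip (hk : 0 < k) {m : ℕ} (hm : m ≤ 2 * k ^ 2 + k - 2) : (strip k m).card = 3 :=
  card_cell hk (strip_row_lt hk hm).1 (Nat.lt_succ_iff.mp (Nat.mod_lt _ (by omega)))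
    (strip_row_lt hk hm).2

lemma card_strip_inter_strip_succ (hk : 0 < k) {m : ℕ} (hm : m < 2 * k ^ 2 + k - 2) :
    (strip k m ∩ strip k (m + 1)).card = 2 := by
  have hE : 0 < 2 * k + 1 := by omega
  have hdm := Nat.div_add_mod m (2 * k + 1)
  have hr := Nat.mod_lt m hE
  obtain ⟨hq, hbridge⟩ := strip_row_lt hk hm.le
  have hbridge1 := (strip_row_lt hk (m := m + 1) hm).2
  rcases (by omega : m % (2 * k + 1) < 2 * k ∨ m % (2 * k + 1) = 2 * k) with hlt | heq
  · obtain ⟨hdiv, hmod⟩ : (m + 1) / (2 * k + 1) = m / (2 * k + 1) ∧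
        (m + 1) % (2 * k + 1) = m % (2 * k + 1) + 1 :=
      (Nat.div_mod_unique hE).mpr ⟨by omega, by omega⟩
    rw [hdiv, hmod] at hbridge1
    rw [strip, strip, hdiv, hmod, cell, cell, if_pos hlt]
    split_ifs with h
    · exact card_fan_inter_fan_succ hk hq h
    · exact card_fan_inter_bridge hk (hbridge1 (by omega)) (by omega)
  · obtain ⟨hdiv, hmod⟩ : (m + 1) / (2 * k + 1) = m / (2 * k + 1) + 1 ∧
        (m + 1) % (2 * k + 1) = 0 :=
      (Nat.div_mod_unique hE).mpr ⟨by rw [mul_add]; omega, by omega⟩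
    rw [strip, strip, hdiv, hmod, cell, cell, if_neg (by omega), if_pos (by omega)]
    exact card_bridge_inter_fan_zero hk (hbridge heq)

lemma card_strip_inter_strip_le_one (hk : 0 < k) {m m' : ℕ} (hmm' : m + 2 ≤ m')
    (hm' : m' ≤ 2 * k ^ 2 + k - 2) : (strip k m ∩ strip k m').card ≤ 1 := by
  have hE : 0 < 2 * k + 1 := by omega
  have hdm := Nat.div_add_mod m (2 * k + 1)
  have hdm' := Nat.div_add_mod m' (2 * k + 1)
  have hr := Nat.mod_lt m hE
  have hr' := Nat.mod_lt m' hE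
  obtain ⟨hq', hbridge'⟩ := strip_row_lt hk hm'
  refine card_cell_inter_cell_le_one hk hq' (by omega) (by omega) hbridge' ?_
  rcases (Nat.div_le_div_right (c := 2 * k + 1) (by omega : m ≤ m')).eq_or_lt with heq | hlt
  · rw [heq] at hdm
    exact Or.inl ⟨heq, by omega⟩
  · refine Or.inr ⟨hlt, fun h1 _ => ?_⟩
    rw [← h1, mul_add] at hdm'
    omega

theorem isFacetPath_strip (hk : 0 < k) :
    IsFacetPath 3 (fun i : Fin (2 * k ^ 2 + k - 2 + 1) => strip k i) :=
  isFacetPath_of_card_inter (strip k) (fun _ hm => card_strip hk hm)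
    (fun _ hm => card_strip_inter_strip_succ hk hm)
    (fun _ _ hmm' hm' => Nat.lt_succ_of_le (card_strip_inter_strip_le_one hk hmm' hm'))

end WaleckiStrip

-- The strip for `k = 1` has length `1 < (2/9)(6 - 3)²`, so `n = 6` needs this path.
lemma isFacetPath_five :
    IsFacetPath 3 (![{0, 1, 2}, {0, 1, 3}, {1, 3, 4}] : Fin 3 → Finset (Fin 5)) := by
  unfold IsFacetPath
  decide

lemma two_ninths_mul_sq_le {n k : ℕ} (hk : 0 < k) (hn : 3 ≤ n) (hnk : n ≤ 3 * k + 3)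
    (hsmall : n ≤ 5 ∨ 2 ≤ k) : (2 / 9 : ℚ) * ((n : ℚ) - 3) ^ 2 ≤ ((2 * k ^ 2 + k - 2 : ℕ) : ℚ) := by
  have hk' : (1 : ℚ) ≤ k := by exact_mod_cast hk
  have hn' : (3 : ℚ) ≤ n := by exact_mod_cast hn
  have hnk' : (n : ℚ) ≤ 3 * k + 3 := by exact_mod_cast hnk
  rw [Nat.cast_sub (by nlinarith)]
  push_cast
  rcases hsmall with h | h
  · have h' : (n : ℚ) ≤ 5 := by exact_mod_cast h
    nlinarith
  · have h' : (2 : ℚ) ≤ k := by exact_mod_cast h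
    nlinarith

/-- For every `n = 3k+1` with `k ≥ 1` there is a pure 2-dimensional complex on `n`
vertices whose adjacency graph is a path of length at least `2k² + k − 2`; and
consequently `H_s(n,3) ≥ (2/9)(n−3)²` for all `n ≥ 3`. -/
theorem dimension_two_lower_bound :
    (∀ k : ℕ, 1 ≤ k →
      ∃ (N : ℕ) (X : Fin (N + 1) → Finset (Fin (3 * k + 1))),
        2 * k ^ 2 + k - 2 ≤ N ∧
        Function.Injective X ∧
        (∀ i, (X i).card = 3) ∧
        (∀ i j : Fin (N + 1),
          (((X i) \ (X j)).card = 1 ∧ ((X j) \ (X i)).card = 1) ↔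
            (i.val + 1 = j.val ∨ j.val + 1 = i.val))) ∧
    (∀ n : ℕ, 3 ≤ n → (2 : ℚ) / 9 * ((n : ℚ) - 3) ^ 2 ≤ (Hs n 3 : ℚ)) := by
  refine ⟨fun k hk => ⟨_, _, le_rfl, WaleckiStrip.isFacetPath_strip hk⟩, fun n hn => ?_⟩
  rcases (by omega : n = 3 ∨ n = 6 ∨ (n ≠ 3 ∧ n ≠ 6)) with rfl | rfl | ⟨hn3, hn6⟩
  · norm_num
  · have h := (isFacetPath_five.map (Fin.castLE_injective (by norm_num : 5 ≤ 6))).le_Hs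
    norm_num
    exact_mod_cast h
  · have hk : 0 < (n - 1) / 3 := by omega
    have h := ((WaleckiStrip.isFacetPath_strip hk).map
      (Fin.castLE_injective (by omega : 3 * ((n - 1) / 3) + 1 ≤ n))).le_Hs
    calc (2 / 9 : ℚ) * ((n : ℚ) - 3) ^ 2
        ≤ ((2 * ((n - 1) / 3) ^ 2 + (n - 1) / 3 - 2 : ℕ) : ℚ) :=
          two_ninths_mul_sq_le hk hn (by omega) (by omega)
      _ ≤ Hs n 3 := by exact_mod_cast h
end

section
/- The complete graph K_{2k+1} on 2k+1 vertices can be decomposed into k edge-disjoint Hamiltonian cycles. -/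
/-!
Walecki's construction. Write the vertices as `∞` and `ℤ/2k`. The zigzag `0, 1, -1, 2, -2, …, k`
visits every residue once, and sums of consecutive terms are alternately `1` and `0`; closing it up
through `∞` gives a Hamiltonian cycle. Its translate by `i` has consecutive sums `2i` or `2i + 1`
and joins `∞` to `i` and `i + k`, the two residues `b` with `2b = 2i`. So if the edge `{a, b}` gets
the colour `⌊(a + b) / 2⌋`, with `a + b` read in `{0, …, 2k - 1}` and `{∞, b}` treated as `{b, b}`,
the `i`-th translate lies in the `i`-th colour class for every `i < k`; and the colour classes of
any edge colouring partition the edges.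
-/

namespace SimpleGraph

variable {V K : Type*} {G : SimpleGraph V}

theorem EdgeLabeling.mem_edgeSet_iff_existsUnique_labelGraph (C : EdgeLabeling G K)
    (e : Sym2 V) : e ∈ G.edgeSet ↔ ∃! k, e ∈ (C.labelGraph k).edgeSet := by
  simp only [labelGraph, edgeSet_fromEdgeSet, Set.mem_sdiff, Set.mem_ofPred_eq]
  refine ⟨fun he => ⟨C ⟨e, he⟩, ⟨⟨he, rfl⟩, G.not_isDiag_of_mem_edgeSet he⟩, ?_⟩, ?_⟩
  · rintro k ⟨⟨_, rfl⟩, -⟩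
    rfl
  · rintro ⟨k, ⟨⟨he, -⟩, -⟩, -⟩
    exact he

theorem exists_isHamiltonianCycle_of_bijective [DecidableEq V] {n : ℕ} [NeZero n] (hn : 3 ≤ n)
    {f : Fin n → V} (hf : f.Bijective) (hadj : ∀ j, G.Adj (f j) (f (j + 1))) :
    ∃ (v : V) (w : G.Walk v v), w.IsHamiltonianCycle := by
  obtain ⟨m, rfl⟩ : ∃ m, n = m + 3 := ⟨n - 3, by omega⟩
  let φ : cycleGraph (m + 3) →g G := ⟨f, fun {u v} huv => by
    rcases cycleGraph_adj.mp huv with h | h <;> rw [sub_eq_iff_eq_add'] at h <;> subst h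
    exacts [(hadj v).symm, hadj u]⟩
  have hcycle : (cycleGraph.cycle m).IsHamiltonianCycle :=
    Walk.isHamiltonianCycle_iff_isCycle_and_length_eq.mpr ⟨cycleGraph.isCycle_cycle, by simp⟩
  exact ⟨_, _, hcycle.map (f := φ) hf⟩

end SimpleGraph

open SimpleGraph

namespace Walecki

/-- The zigzag `0, 1, n - 1, 2, n - 2, …` through `{0, …, n - 1}`. -/
def zigzag (n m : ℕ) : ℕ :=
  if m = 0 then 0 else if m % 2 = 1 then (m + 1) / 2 else n - m / 2

lemma zigzag_lt {n m : ℕ} (hm : m < n) : zigzag n m < n := by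
  unfold zigzag
  split_ifs <;> omega

lemma zigzag_injOn (n : ℕ) : Set.InjOn (zigzag n) (Set.Iio n) := by
  intro m hm m' hm' h
  simp only [Set.mem_Iio] at hm hm'
  unfold zigzag at h
  split_ifs at h <;> omega

lemma zigzag_add_zigzag_succ {n m : ℕ} (hm : m + 1 < n) :
    (zigzag n m + zigzag n (m + 1) : ZMod n) = 0 ∨
      (zigzag n m + zigzag n (m + 1) : ZMod n) = 1 := by
  have h : zigzag n m + zigzag n (m + 1) = 1 ∨ zigzag n m + zigzag n (m + 1) = n ∨
      zigzag n m + zigzag n (m + 1) = n + 1 := by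
    simp only [zigzag, Nat.add_one_ne_zero, if_false]
    split_ifs <;> omega
  rcases h with h | h | h <;> rw [← Nat.cast_add, h] <;> simp

lemma zigzag_two_mul_sub_one {k : ℕ} (hk : 0 < k) : zigzag (2 * k) (2 * k - 1) = k := by
  unfold zigzag
  split_ifs <;> omega

lemma val_natCast_div_two {k i s : ℕ} (hi : i < k) (hs : s = 2 * i ∨ s = 2 * i + 1) :
    (s : ZMod (2 * k)).val / 2 = i := by
  rw [ZMod.val_natCast_of_lt (by omega)]
  omega

/-- On `Option R`, with `none` as the vertex `∞`; the value at `(none, none)` is never used. -/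
def pairSum {R : Type*} [Add R] [Zero R] : Option R → Option R → R
  | some a, some b => a + b
  | some a, none => a + a
  | none, some b => b + b
  | none, none => 0

lemma pairSum_comm {R : Type*} [AddCommMagma R] [Zero R] (x y : Option R) :
    pairSum x y = pairSum y x := by
  cases x <;> cases y <;> simp [pairSum, add_comm]

variable {k : ℕ}

def colour [NeZero k] (x y : Option (ZMod (2 * k))) : Fin k :=
  ⟨(pairSum x y).val / 2, by have := (pairSum x y).val_lt; omega⟩

variable (k) in
def labeling [NeZero k] : TopEdgeLabeling (Option (ZMod (2 * k))) (Fin k) :=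
  EdgeLabeling.mk (fun x y _ => colour x y) fun x y _ => by simp only [colour, pairSum_comm x y]

def cycleEnum (i : Fin k) (p : Fin (2 * k + 1)) : Option (ZMod (2 * k)) :=
  if (p : ℕ) = 0 then none else some (zigzag (2 * k) (p - 1) + (i : ℕ))

lemma cycleEnum_injective (i : Fin k) : Function.Injective (cycleEnum i) := by
  intro p q h
  unfold cycleEnum at h
  split_ifs at h with hp hq hq
  · omega
  · have hz := add_right_cancel (Option.some_inj.mp h)
    rw [ZMod.natCast_eq_natCast_iff', Nat.mod_eq_of_lt (zigzag_lt (by omega)),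
      Nat.mod_eq_of_lt (zigzag_lt (by omega))] at hz
    have := zigzag_injOn (2 * k) (Set.mem_Iio.mpr (by omega)) (Set.mem_Iio.mpr (by omega)) hz
    omega

lemma cycleEnum_bijective [NeZero k] (i : Fin k) : Function.Bijective (cycleEnum i) := by
  rw [Fintype.bijective_iff_injective_and_card]
  exact ⟨cycleEnum_injective i, by simp [ZMod.card]⟩

lemma pairSum_cycleEnum [NeZero k] (i : Fin k) (p : Fin (2 * k + 1)) :
    pairSum (cycleEnum i p) (cycleEnum i (p + 1)) = ((2 * i : ℕ) : ZMod (2 * k)) ∨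
      pairSum (cycleEnum i p) (cycleEnum i (p + 1)) = ((2 * i + 1 : ℕ) : ZMod (2 * k)) := by
  have hk : 0 < k := Nat.pos_of_neZero k
  rw [cycleEnum, cycleEnum, Fin.val_add_one]
  by_cases hlast : p = Fin.last (2 * k)
  · subst hlast
    left
    simp only [Fin.val_last, if_true, show 2 * k ≠ 0 by omega, if_false, pairSum,
      zigzag_two_mul_sub_one hk]
    have h2k : ((2 * k : ℕ) : ZMod (2 * k)) = 0 := ZMod.natCast_self _
    push_cast at h2k ⊢
    linear_combination h2k
  by_cases hzero : (p : ℕ) = 0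
  · left
    simp only [pairSum, hzero, if_true, hlast, if_false, zero_add, one_ne_zero, zigzag, tsub_self,
      Nat.cast_zero, Nat.cast_mul, Nat.cast_ofNat]
    ring
  · simp only [hlast, hzero, if_false, Nat.add_one_ne_zero, pairSum, Nat.add_sub_cancel]
    have h := zigzag_add_zigzag_succ (n := 2 * k) (m := p - 1)
      (by have := Fin.val_lt_last hlast; omega)
    rw [Nat.sub_add_cancel (by omega)] at h
    push_cast
    rcases h with h | h
    · left; linear_combination h
    · right; linear_combination h

lemma colour_cycleEnum [NeZero k] (i : Fin k) (p : Fin (2 * k + 1)) :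
    colour (cycleEnum i p) (cycleEnum i (p + 1)) = i := by
  ext
  rcases pairSum_cycleEnum i p with h | h <;>
    simpa only [colour, h] using val_natCast_div_two i.isLt (by omega)

end Walecki

theorem exists_topEdgeLabeling_forall_isHamiltonianCycle {V : Type*} [Fintype V] [DecidableEq V]
    {k : ℕ} (hV : Fintype.card V = 2 * k + 1) :
    ∃ C : TopEdgeLabeling V (Fin k),
      ∀ i, ∃ (v : V) (w : (C.labelGraph i).Walk v v), w.IsHamiltonianCycle := by
  rcases k.eq_zero_or_pos with rfl | hk
  · have : Subsingleton V := Fintype.card_le_one_iff_subsingleton.mp hV.le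
    exact ⟨fun e => ((⊤ : SimpleGraph V).not_isDiag_of_mem_edgeSet e.2
      e.1.isDiag_of_subsingleton).elim, fun i => i.elim0⟩
  have : NeZero k := ⟨hk.ne'⟩
  let e : V ≃ Option (ZMod (2 * k)) := Fintype.equivOfCardEq (by simp [ZMod.card, hV])
  refine ⟨(Walecki.labeling k).pullback e.toEmbedding, fun i => ?_⟩
  have hf : (e.symm ∘ Walecki.cycleEnum i).Bijective :=
    e.symm.bijective.comp (Walecki.cycleEnum_bijective i)
  refine exists_isHamiltonianCycle_of_bijective (by omega) hf fun p => ?_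
  have hp : p ≠ p + 1 := left_ne_add.mpr (Fin.one_eq_zero_iff.not.mpr (by omega))
  refine (TopEdgeLabeling.labelGraph_adj _ _).mpr ⟨hf.injective.ne hp, ?_⟩
  show Walecki.colour (e (e.symm _)) (e (e.symm _)) = i
  simpa only [Equiv.apply_symm_apply] using Walecki.colour_cycleEnum i p

/-- The complete graph `K_{2k+1}` on `2k+1` vertices can be decomposed into `k`
edge-disjoint Hamiltonian cycles: there are `k` subgraphs, each the edge set of a
Hamiltonian cycle, such that every edge of `K_{2k+1}` lies in exactly one of them. -/
theorem complete_graph_hamiltonian_decomposition (k : ℕ) :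
    ∃ C : Fin k → SimpleGraph (Fin (2 * k + 1)),
      (∀ i, ∃ (v : Fin (2 * k + 1)) (w : (C i).Walk v v), w.IsHamiltonianCycle) ∧
      (∀ e : Sym2 (Fin (2 * k + 1)),
        e ∈ (⊤ : SimpleGraph (Fin (2 * k + 1))).edgeSet ↔ ∃! i, e ∈ (C i).edgeSet) := by
  obtain ⟨C, hC⟩ := exists_topEdgeLabeling_forall_isHamiltonianCycle (Fintype.card_fin _)
  exact ⟨C.labelGraph, hC, C.mem_edgeSet_iff_existsUnique_labelGraph⟩
end

section
/- If G_1 and G_2 are paths of lengths l_1 and l_2 respectively, then the Cartesian product graph G_1 □ G_2 contains an induced path of length at least l_1·l_2/2. -/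
namespace InducedPathAux

/-- x-coordinate of the snake path: block `k`, offset `s`. -/
def gx (l₂ k s : ℕ) : ℕ := if s ≤ l₂ then 2 * k else 2 * k + 1

/-- y-coordinate of the snake path. -/
def gy (l₂ k s : ℕ) : ℕ :=
  if s ≤ l₂ then (if k % 2 = 0 then s else l₂ - s)
  else (if k % 2 = 0 then l₂ else 0)

lemma gy_le (l₂ k s : ℕ) : gy l₂ k s ≤ l₂ := by
  unfold gy; split_ifs <;> omega

lemma g_eq_iff {l₂ k₁ s₁ k₂ s₂ : ℕ} (h₁ : s₁ ≤ l₂ + 1) (h₂ : s₂ ≤ l₂ + 1) :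
    (gx l₂ k₁ s₁ = gx l₂ k₂ s₂ ∧ gy l₂ k₁ s₁ = gy l₂ k₂ s₂) ↔ (k₁ = k₂ ∧ s₁ = s₂) := by
  unfold gx gy; split_ifs <;> omega

lemma g_adj_iff {l₂ k₁ s₁ k₂ s₂ : ℕ} (h₁ : s₁ ≤ l₂ + 1) (h₂ : s₂ ≤ l₂ + 1) :
    (((gx l₂ k₁ s₁ + 1 = gx l₂ k₂ s₂ ∨ gx l₂ k₂ s₂ + 1 = gx l₂ k₁ s₁) ∧
        gy l₂ k₁ s₁ = gy l₂ k₂ s₂) ∨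
      ((gy l₂ k₁ s₁ + 1 = gy l₂ k₂ s₂ ∨ gy l₂ k₂ s₂ + 1 = gy l₂ k₁ s₁) ∧
        gx l₂ k₁ s₁ = gx l₂ k₂ s₂)) ↔
    ((k₁ = k₂ ∧ (s₁ + 1 = s₂ ∨ s₂ + 1 = s₁)) ∨
      (k₂ = k₁ + 1 ∧ s₁ = l₂ + 1 ∧ s₂ = 0) ∨
      (k₁ = k₂ + 1 ∧ s₂ = l₂ + 1 ∧ s₁ = 0)) := by
  unfold gx gy
  split_ifs <;> (try omega) <;> simp only [false_or, or_false, false_and, and_false] <;> omega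

lemma uniq {B k₁ s₁ k₂ s₂ : ℕ} (hB : 0 < B) (h₁ : s₁ < B) (h₂ : s₂ < B)
    (h : k₁ * B + s₁ = k₂ * B + s₂) : k₁ = k₂ ∧ s₁ = s₂ := by
  have e₁ : (k₁ * B + s₁) / B = k₁ ∧ (k₁ * B + s₁) % B = s₁ :=
    (Nat.div_mod_unique hB).mpr ⟨by ring, h₁⟩
  have e₂ : (k₂ * B + s₂) / B = k₂ ∧ (k₂ * B + s₂) % B = s₂ :=
    (Nat.div_mod_unique hB).mpr ⟨by ring, h₂⟩
  rw [h] at e₁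
  exact ⟨e₁.1.symm.trans e₂.1, e₁.2.symm.trans e₂.2⟩

lemma step_iff {B : ℕ} (hB : 2 ≤ B) {k₁ s₁ k₂ s₂ : ℕ} (h₁ : s₁ < B) (h₂ : s₂ < B) :
    k₁ * B + s₁ + 1 = k₂ * B + s₂ ↔
      ((k₁ = k₂ ∧ s₁ + 1 = s₂) ∨ (k₂ = k₁ + 1 ∧ s₁ + 1 = B ∧ s₂ = 0)) := by
  constructor
  · intro h
    by_cases hs : s₁ + 1 < B
    · left
      exact uniq (by omega) hs h₂ (by rwa [Nat.add_assoc] at h)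
    · right
      have hs1 : s₁ + 1 = B := by omega
      have h' : (k₁ + 1) * B + 0 = k₂ * B + s₂ := by
        have : (k₁ + 1) * B = k₁ * B + B := by ring
        omega
      have := uniq (by omega) (by omega) h₂ h'
      exact ⟨this.1.symm, hs1, this.2.symm⟩
  · rintro (⟨rfl, rfl⟩ | ⟨rfl, hs1, rfl⟩)
    · ring
    · have : (k₁ + 1) * B = k₁ * B + B := by ring
      omega

def fx (l₂ t : ℕ) : ℕ := gx l₂ (t / (l₂ + 2)) (t % (l₂ + 2))
def fy (l₂ t : ℕ) : ℕ := gy l₂ (t / (l₂ + 2)) (t % (l₂ + 2))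

lemma fy_le (l₂ t : ℕ) : fy l₂ t ≤ l₂ := gy_le _ _ _

lemma fx_le (l₁ l₂ t : ℕ) (ht : t ≤ (l₁ / 2 + 1) * (l₂ + 2) - 2) : fx l₂ t ≤ l₁ := by
  unfold fx gx
  have hB : 0 < l₂ + 2 := by omega
  have hdm : (l₂ + 2) * (t / (l₂ + 2)) + t % (l₂ + 2) = t := Nat.div_add_mod t (l₂ + 2)
  have hsB : t % (l₂ + 2) < l₂ + 2 := Nat.mod_lt _ hB
  set r := l₁ / 2 + 1 with hr
  set k := t / (l₂ + 2) with hk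
  set s := t % (l₂ + 2) with hs
  have hrB : 2 ≤ r * (l₂ + 2) := by
    have := Nat.mul_le_mul (show 1 ≤ r by omega) (show 2 ≤ l₂ + 2 by omega)
    omega
  have hdm' : k * (l₂ + 2) + s = t := by rw [mul_comm] at hdm; exact hdm
  have hkr : k < r := by
    by_contra hc
    push_neg at hc
    have h1 : r * (l₂ + 2) ≤ k * (l₂ + 2) := Nat.mul_le_mul_right _ hc
    omega
  split_ifs with hcase
  · omega
  · have hk1 : k + 1 < r := by
      by_contra hc
      push_neg at hc
      have hrk : r = k + 1 := by omega
      have h1 : r * (l₂ + 2) = k * (l₂ + 2) + (l₂ + 2) := by rw [hrk]; ring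
      omega
    omega

lemma f_inj (l₂ : ℕ) {t₁ t₂ : ℕ} (hx : fx l₂ t₁ = fx l₂ t₂) (hy : fy l₂ t₁ = fy l₂ t₂) :
    t₁ = t₂ := by
  have h₁ : t₁ % (l₂ + 2) < l₂ + 2 := Nat.mod_lt _ (by omega)
  have h₂ : t₂ % (l₂ + 2) < l₂ + 2 := Nat.mod_lt _ (by omega)
  have h := (g_eq_iff (by omega) (by omega)).mp ⟨hx, hy⟩
  calc t₁ = (l₂ + 2) * (t₁ / (l₂ + 2)) + t₁ % (l₂ + 2) := (Nat.div_add_mod _ _).symm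
    _ = (l₂ + 2) * (t₂ / (l₂ + 2)) + t₂ % (l₂ + 2) := by rw [h.1, h.2]
    _ = t₂ := Nat.div_add_mod _ _

lemma f_adj_iff (l₂ t₁ t₂ : ℕ) :
    (((fx l₂ t₁ + 1 = fx l₂ t₂ ∨ fx l₂ t₂ + 1 = fx l₂ t₁) ∧ fy l₂ t₁ = fy l₂ t₂) ∨
      ((fy l₂ t₁ + 1 = fy l₂ t₂ ∨ fy l₂ t₂ + 1 = fy l₂ t₁) ∧ fx l₂ t₁ = fx l₂ t₂)) ↔
    (t₁ + 1 = t₂ ∨ t₂ + 1 = t₁) := by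
  have hB : 2 ≤ l₂ + 2 := by omega
  unfold fx fy
  set k₁ := t₁ / (l₂ + 2) with hk₁
  set s₁ := t₁ % (l₂ + 2) with hs₁
  set k₂ := t₂ / (l₂ + 2) with hk₂
  set s₂ := t₂ % (l₂ + 2) with hs₂
  have h₁ : s₁ < l₂ + 2 := Nat.mod_lt _ (by omega)
  have h₂ : s₂ < l₂ + 2 := Nat.mod_lt _ (by omega)
  have e₁ : k₁ * (l₂ + 2) + s₁ = t₁ := Nat.div_add_mod' t₁ (l₂ + 2)
  have e₂ : k₂ * (l₂ + 2) + s₂ = t₂ := Nat.div_add_mod' t₂ (l₂ + 2)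
  have st12 := step_iff hB h₁ h₂ (k₁ := k₁) (k₂ := k₂)
  have st21 := step_iff hB h₂ h₁ (k₁ := k₂) (k₂ := k₁)
  rw [e₁, e₂] at st12
  rw [e₂, e₁] at st21
  rw [g_adj_iff (by omega) (by omega)]
  clear_value k₁ s₁ k₂ s₂
  clear e₁ e₂ hk₁ hs₁ hk₂ hs₂
  rw [st12, st21]
  omega

lemma count_bound (l₁ l₂ : ℕ) : l₁ * l₂ ≤ 2 * ((l₁ / 2 + 1) * (l₂ + 2) - 2) := by
  have h1 : (l₁ + 1) * (l₂ + 2) ≤ (2 * (l₁ / 2 + 1)) * (l₂ + 2) :=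
    Nat.mul_le_mul_right _ (by omega)
  have h2 : (l₁ + 1) * (l₂ + 2) = l₁ * l₂ + 2 * l₁ + l₂ + 2 := by ring
  have h3 : (2 * (l₁ / 2 + 1)) * (l₂ + 2) = 2 * ((l₁ / 2 + 1) * (l₂ + 2)) := by ring
  have h4 : 2 ≤ (l₁ / 2 + 1) * (l₂ + 2) := by
    have := Nat.mul_le_mul (show 1 ≤ l₁ / 2 + 1 by omega) (show 2 ≤ l₂ + 2 by omega)
    omega
  rcases Nat.eq_zero_or_pos l₁ with h | h
  · simp [h]
  · have h5 : l₁ * l₂ + 4 ≤ 2 * ((l₁ / 2 + 1) * (l₂ + 2)) := by omega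
    omega

end InducedPathAux

open InducedPathAux in
/-- If `G₁` and `G₂` are paths of lengths `l₁` and `l₂`, then their Cartesian (box)
product contains an induced path of length at least `l₁·l₂/2`. -/
theorem induced_path_in_product_of_paths (l₁ l₂ : ℕ) :
    ∃ (N : ℕ) (p : Fin (N + 1) → Fin (l₁ + 1) × Fin (l₂ + 1)),
      l₁ * l₂ ≤ 2 * N ∧
      Function.Injective p ∧
      (∀ i j : Fin (N + 1),
        (SimpleGraph.pathGraph (l₁ + 1) □ SimpleGraph.pathGraph (l₂ + 1)).Adj (p i) (p j) ↔
          (i.val + 1 = j.val ∨ j.val + 1 = i.val)) := by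
  refine ⟨(l₁ / 2 + 1) * (l₂ + 2) - 2,
    fun i => (⟨fx l₂ i.val, Nat.lt_succ_of_le (fx_le l₁ l₂ i.val (Nat.lt_succ_iff.mp i.isLt))⟩,
      ⟨fy l₂ i.val, Nat.lt_succ_of_le (fy_le l₂ i.val)⟩),
    count_bound l₁ l₂, ?_, ?_⟩
  · intro i j hij
    simp only [Prod.mk.injEq, Fin.mk.injEq] at hij
    exact Fin.ext (f_inj l₂ hij.1 hij.2)
  · intro i j
    rw [SimpleGraph.boxProd_adj]
    simp only [SimpleGraph.pathGraph_adj, Fin.mk.injEq, Prod.mk.injEq]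
    exact f_adj_iff l₂ i.val j.val
end

section
/- In a pure multicomplex, if M is a connected layer multicomplex (c.l.m.) with layers L_a, ..., L_b, then for every face S the link of S in M, layered by lk_{L_i}(S), is again a connected layer multicomplex. -/
/-!
Facets of the link of `S` in a layer `L i` are the `X - S` with `S ≤ X ∈ L i`, and `T ≤ X - S`
iff `S + T ≤ X`. Hence the layers whose link contains `T` are exactly the layers of `M` containing
`S + T`, an interval by hypothesis; for `T = 0` this interval is bounded and nonempty, so it is
`[a', b']` for some `a' ≤ b'`. Disjointness of the link layers holds because `X ↦ X - S` is
injective on multisets containing `S`.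
-/

/-- `IsCLM n d a b L` : the layers `L a, …, L b` form a connected layer multicomplex
of rank `d` on `n` elements. The facets (size-`d` multisets of `[n]`) are partitioned
into the nonempty layers `L a, …, L b`, and for every multiset `S` the set of layers
whose star contains `S` is an interval. -/
def IsCLM (n d : ℕ) (a b : ℤ) (L : ℤ → Set (Multiset (Fin n))) : Prop :=
  a ≤ b ∧
  (∀ i X, X ∈ L i → Multiset.card X = d) ∧
  (∀ i, (L i).Nonempty ↔ a ≤ i ∧ i ≤ b) ∧
  (∀ i j X, X ∈ L i → X ∈ L j → i = j) ∧
  (∀ (S : Multiset (Fin n)) (i j k : ℤ), i ≤ j → j ≤ k →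
    (∃ X ∈ L i, S ≤ X) → (∃ X ∈ L k, S ≤ X) → ∃ X ∈ L j, S ≤ X)

/-- `Hclm n d` : the maximum length of connected layer multicomplexes of rank `d`
on `n` elements. -/
noncomputable def Hclm (n d : ℕ) : ℕ :=
  sSup {l | ∃ (a b : ℤ) (L : ℤ → Set (Multiset (Fin n))),
    IsCLM n d a b L ∧ (b - a).toNat = l}

namespace Multiset

variable {α : Type*} [DecidableEq α]

def link (F : Set (Multiset α)) (S : Multiset α) : Set (Multiset α) :=
  {Y | ∃ X ∈ F, S ≤ X ∧ Y = X - S}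

theorem exists_mem_link_le_iff {F : Set (Multiset α)} {S T : Multiset α} :
    (∃ Y ∈ link F S, T ≤ Y) ↔ ∃ X ∈ F, S + T ≤ X := by
  constructor
  · rintro ⟨_, ⟨X, hX, hSX, rfl⟩, hTY⟩
    exact ⟨X, hX, (le_tsub_iff_left hSX).1 hTY⟩
  · rintro ⟨X, hX, hSTX⟩
    have hSX : S ≤ X := le_self_add.trans hSTX
    exact ⟨X - S, ⟨X, hX, hSX, rfl⟩, (le_tsub_iff_left hSX).2 hSTX⟩

theorem link_nonempty_iff {F : Set (Multiset α)} {S : Multiset α} :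
    (link F S).Nonempty ↔ ∃ X ∈ F, S ≤ X := by
  simpa [Set.Nonempty] using exists_mem_link_le_iff (F := F) (S := S) (T := 0)

theorem link_inter (F G : Set (Multiset α)) (S : Multiset α) :
    link F S ∩ link G S = link (F ∩ G) S := by
  ext Y
  constructor
  · rintro ⟨⟨X, hX, hSX, rfl⟩, ⟨X', hX', hSX', hXX'⟩⟩
    rw [tsub_left_inj hSX hSX'] at hXX'
    exact ⟨X, ⟨hX, hXX' ▸ hX'⟩, hSX, rfl⟩
  · rintro ⟨X, ⟨hXF, hXG⟩, hSX, rfl⟩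
    exact ⟨⟨X, hXF, hSX, rfl⟩, ⟨X, hXG, hSX, rfl⟩⟩

theorem card_of_mem_link {F : Set (Multiset α)} {S Y : Multiset α} {d : ℕ}
    (hF : ∀ X ∈ F, card X = d) (hY : Y ∈ link F S) : card Y = d - card S := by
  obtain ⟨X, hX, hSX, rfl⟩ := hY
  rw [card_sub hSX, hF X hX]

end Multiset

namespace IsCLM

variable {n d : ℕ} {a b : ℤ} {L : ℤ → Set (Multiset (Fin n))}

theorem star_subset_Icc (hM : IsCLM n d a b L) (S : Multiset (Fin n)) :
    {i | ∃ X ∈ L i, S ≤ X} ⊆ Set.Icc a b := by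
  rintro i ⟨X, hX, -⟩
  exact (hM.2.2.1 i).1 ⟨X, hX⟩

theorem ordConnected_star (hM : IsCLM n d a b L) (S : Multiset (Fin n)) :
    Set.OrdConnected {i | ∃ X ∈ L i, S ≤ X} :=
  ⟨fun _ hi _ hk _ ⟨hij, hjk⟩ => hM.2.2.2.2 S _ _ _ hij hjk hi hk⟩

theorem exists_star_eq_Icc (hM : IsCLM n d a b L) {S : Multiset (Fin n)}
    (hS : ∃ i, ∃ X ∈ L i, S ≤ X) :
    ∃ a' b', a' ≤ b' ∧ {i | ∃ X ∈ L i, S ≤ X} = Set.Icc a' b' := by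
  have hI_below := bddBelow_Icc.mono (hM.star_subset_Icc S)
  have hI_above := bddAbove_Icc.mono (hM.star_subset_Icc S)
  exact ⟨_, _, csInf_le_csSup hS hI_below hI_above,
    (Set.Nonempty.ordConnected_iff_of_bdd hS hI_below hI_above).1 (hM.ordConnected_star S)⟩

end IsCLM

open Multiset in
/-- If `M` is a connected layer multicomplex with layers `L a, …, L b`, then for every
face `S` of `M` the link of `S` in `M`, layered by `lk_{L i}(S)`, is again a connected
layer multicomplex (of rank `d - |S|`, its layers being the interval where they are
nonempty). -/
theorem link_isCLM (n d : ℕ) (a b : ℤ) (L : ℤ → Set (Multiset (Fin n)))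
    (hM : IsCLM n d a b L) (S : Multiset (Fin n))
    (hS : ∃ i, ∃ X ∈ L i, S ≤ X) :
    ∃ a' b' : ℤ,
      IsCLM n (d - Multiset.card S) a' b'
        (fun i => {Y | ∃ X ∈ L i, S ≤ X ∧ Y = X - S}) := by
  change ∃ a' b', IsCLM n (d - card S) a' b' (fun i => link (L i) S)
  obtain ⟨a', b', hab', hI⟩ := hM.exists_star_eq_Icc hS
  obtain ⟨-, hcard, -, hdisj, hconv⟩ := hM
  refine ⟨a', b', hab', fun i Y hY => card_of_mem_link (hcard i) hY, fun i => ?_,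
    fun i j Y hi hj => ?_, fun T i j k hij hjk hi hk => ?_⟩
  · rw [link_nonempty_iff, ← Set.mem_Icc, ← hI]
    rfl
  · have hY : Y ∈ link (L i ∩ L j) S := link_inter (L i) (L j) S ▸ ⟨hi, hj⟩
    obtain ⟨X, ⟨hXi, hXj⟩, -⟩ := hY
    exact hdisj i j X hXi hXj
  · rw [exists_mem_link_le_iff] at hi hk ⊢
    exact hconv (S + T) i j k hij hjk hi hk
end

section
/- Every complete connected layer multicomplex of rank d on n elements (i.e., one whose underlying multicomplex consists of all C(n+d−1,d) multisets of size d from [n]) has length at most d(n−1). -/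
lemma clm_step_bound {n d : ℕ} {L : ℤ → Set (Multiset (Fin n))}
    (hcard : ∀ i X, X ∈ L i → Multiset.card X = d)
    (hdisj : ∀ i j X, X ∈ L i → X ∈ L j → i = j)
    (hconn : ∀ (S : Multiset (Fin n)) (i j k : ℤ), i ≤ j → j ≤ k →
      (∃ X ∈ L i, S ≤ X) → (∃ X ∈ L k, S ≤ X) → ∃ X ∈ L j, S ≤ X)
    {S : Multiset (Fin n)} (hS : Multiset.card S + 1 = d)
    {i k : ℤ} (hik : i ≤ k) (hi : ∃ X ∈ L i, S ≤ X) (hk : ∃ X ∈ L k, S ≤ X) :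
    k - i ≤ (n : ℤ) - 1 := by
  have hmem : ∀ j ∈ Finset.Icc i k, ∃ w : Fin n, S + {w} ∈ L j := by
    intro j hj
    rw [Finset.mem_Icc] at hj
    obtain ⟨Z, hZ, hSZ⟩ := hconn S i j k hj.1 hj.2 hi hk
    obtain ⟨t, rfl⟩ := Multiset.le_iff_exists_add.mp hSZ
    have hct : Multiset.card t = 1 := by
      have := hcard j _ hZ
      rw [Multiset.card_add] at this; omega
    obtain ⟨w, rfl⟩ := Multiset.card_eq_one.mp hct
    exact ⟨w, hZ⟩
  have hn : Nonempty (Fin n) := by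
    obtain ⟨w, -⟩ := hmem i (by rw [Finset.mem_Icc]; omega)
    exact ⟨w⟩
  have hmem' : ∀ j : ℤ, ∃ w : Fin n, j ∈ Finset.Icc i k → S + {w} ∈ L j := by
    intro j
    by_cases hj : j ∈ Finset.Icc i k
    · obtain ⟨w, hw⟩ := hmem j hj; exact ⟨w, fun _ => hw⟩
    · exact ⟨Classical.arbitrary _, fun h => absurd h hj⟩
  choose g hg using hmem'
  have hcardle : (Finset.Icc i k).card ≤ (Finset.univ : Finset (Fin n)).card := by
    apply Finset.card_le_card_of_injOn g (fun _ _ => Finset.mem_univ _)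
    intro j hj j' hj' hgj
    exact hdisj j j' _ (hg j hj) (hgj ▸ hg j' hj')
  rw [Int.card_Icc, Finset.card_univ, Fintype.card_fin] at hcardle
  omega

lemma clm_dist_bound {n d : ℕ} {L : ℤ → Set (Multiset (Fin n))}
    (hcard : ∀ i X, X ∈ L i → Multiset.card X = d)
    (hdisj : ∀ i j X, X ∈ L i → X ∈ L j → i = j)
    (hconn : ∀ (S : Multiset (Fin n)) (i j k : ℤ), i ≤ j → j ≤ k →
      (∃ X ∈ L i, S ≤ X) → (∃ X ∈ L k, S ≤ X) → ∃ X ∈ L j, S ≤ X)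
    (hcomplete : ∀ X : Multiset (Fin n), Multiset.card X = d → ∃ i, X ∈ L i) :
    ∀ m : ℕ, ∀ (X Y : Multiset (Fin n)) (i j : ℤ), X ∈ L i → Y ∈ L j →
      Multiset.card (Y - X) = m →
      j - i ≤ (m : ℤ) * ((n : ℤ) - 1) ∧ i - j ≤ (m : ℤ) * ((n : ℤ) - 1) := by
  intro m
  induction m with
  | zero =>
    intro X Y i j hX hY h0
    have hYX : Y ≤ X := by
      rw [← tsub_eq_zero_iff_le]
      exact Multiset.card_eq_zero.mp h0
    have hXY : Y = X := Multiset.eq_of_le_of_card_le hYX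
      (by rw [hcard i X hX, hcard j Y hY])
    subst hXY
    have : i = j := hdisj i j Y hX hY
    simp [this]
  | succ m ih =>
    intro X Y i j hX hY hm
    have hdX : Multiset.card X = d := hcard i X hX
    have hdY : Multiset.card Y = d := hcard j Y hY
    have hne : Y - X ≠ 0 := by
      intro h; rw [h] at hm; simp at hm
    obtain ⟨v, hv⟩ := Multiset.exists_mem_of_ne_zero hne
    have hcv : Multiset.count v X < Multiset.count v Y := by
      have := Multiset.count_pos.mpr hv
      rw [Multiset.count_sub] at this; omega
    have hXYne : X - Y ≠ 0 := by
      intro h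
      have hle : X ≤ Y := tsub_eq_zero_iff_le.mp h
      have : X = Y := Multiset.eq_of_le_of_card_le hle (by rw [hdX, hdY])
      rw [this] at hcv; omega
    obtain ⟨u, hu⟩ := Multiset.exists_mem_of_ne_zero hXYne
    have hcu : Multiset.count u Y < Multiset.count u X := by
      have := Multiset.count_pos.mpr hu
      rw [Multiset.count_sub] at this; omega
    have huv : u ≠ v := by intro h; rw [h] at hcu; omega
    have huX : u ∈ X := Multiset.count_pos.mp (by omega)
    set X' := v ::ₘ X.erase u with hX'def
    have hd1 : 1 ≤ d := by
      have hX0 : X ≠ 0 := fun h => by simp [h] at huX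
      have := Multiset.card_pos.mpr hX0; omega
    have hdX' : Multiset.card X' = d := by
      rw [hX'def, Multiset.card_cons, Multiset.card_erase_of_mem huX, hdX,
        Nat.pred_eq_sub_one]
      omega
    obtain ⟨i', hLX'⟩ := hcomplete X' hdX'
    have hSc : Multiset.card (X.erase u) + 1 = d := by
      rw [Multiset.card_erase_of_mem huX, hdX, Nat.pred_eq_sub_one]; omega
    have hSX : X.erase u ≤ X := Multiset.erase_le u X
    have hSX' : X.erase u ≤ X' := Multiset.le_cons_self _ _
    have hstep : i' - i ≤ (n : ℤ) - 1 ∧ i - i' ≤ (n : ℤ) - 1 := by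
      rcases le_total i i' with h | h
      · refine ⟨clm_step_bound hcard hdisj hconn hSc h ⟨X, hX, hSX⟩ ⟨X', hLX', hSX'⟩, ?_⟩
        have := clm_step_bound hcard hdisj hconn hSc h ⟨X, hX, hSX⟩ ⟨X', hLX', hSX'⟩
        -- i - i' ≤ 0 ≤ n - 1? need n ≥ 1
        have hn : 1 ≤ n := by
          have := u.pos; omega
        omega
      · have h1 := clm_step_bound hcard hdisj hconn hSc h ⟨X', hLX', hSX'⟩ ⟨X, hX, hSX⟩
        have hn : 1 ≤ n := by have := u.pos; omega
        exact ⟨by omega, h1⟩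
    have hsub : Y - X' = (Y - X).erase v := by
      ext c
      by_cases hcv' : c = v
      · subst hcv'
        rw [Multiset.count_erase_self, Multiset.count_sub, Multiset.count_sub,
          Multiset.count_cons_self, Multiset.count_erase_of_ne huv.symm]
        omega
      · rw [Multiset.count_erase_of_ne hcv', Multiset.count_sub, Multiset.count_sub,
          Multiset.count_cons_of_ne hcv']
        by_cases hcu' : c = u
        · subst hcu'
          rw [Multiset.count_erase_self]
          omega
        · rw [Multiset.count_erase_of_ne hcu']
    have hm' : Multiset.card (Y - X') = m := by
      rw [hsub, Multiset.card_erase_of_mem hv, hm, Nat.pred_eq_sub_one]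
      omega
    obtain ⟨h1, h2⟩ := ih X' Y i' j hLX' hY hm'
    have hcast : ((m + 1 : ℕ) : ℤ) * ((n : ℤ) - 1) = (m : ℤ) * ((n : ℤ) - 1) + ((n : ℤ) - 1) := by
      push_cast; ring
    constructor <;> rw [hcast] <;> linarith [hstep.1, hstep.2]

/-- Every complete connected layer multicomplex of rank `d` on `n` elements (one whose
underlying multicomplex consists of all size-`d` multisets of `[n]`) has length at most
`d(n−1)`. -/
theorem complete_clm_length_le (n d : ℕ) (a b : ℤ) (L : ℤ → Set (Multiset (Fin n)))
    (hM : IsCLM n d a b L)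
    (hcomplete : ∀ X : Multiset (Fin n), Multiset.card X = d → ∃ i, X ∈ L i) :
    b - a ≤ (d : ℤ) * ((n : ℤ) - 1) := by
  obtain ⟨hab, hcard, hne, hdisj, hconn⟩ := hM
  obtain ⟨XA, hXA⟩ := (hne a).mpr ⟨le_refl a, hab⟩
  obtain ⟨XB, hXB⟩ := (hne b).mpr ⟨hab, le_refl b⟩
  by_cases hn : n = 0
  · subst hn
    have hA0 : XA = 0 := Multiset.eq_zero_of_forall_notMem (fun x => x.elim0)
    have hB0 : XB = 0 := Multiset.eq_zero_of_forall_notMem (fun x => x.elim0)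
    have hd0 : d = 0 := by rw [← hcard a XA hXA, hA0]; rfl
    have : a = b := hdisj a b XA hXA (by rw [hA0, ← hB0]; exact hXB)
    simp [hd0, this]
  · obtain ⟨h1, -⟩ := clm_dist_bound hcard hdisj hconn hcomplete
      (Multiset.card (XB - XA)) XA XB a b hXA hXB rfl
    have hmd : Multiset.card (XB - XA) ≤ d := by
      rw [← hcard b XB hXB]
      exact Multiset.card_le_card (tsub_le_self)
    have hn1 : (0 : ℤ) ≤ (n : ℤ) - 1 := by
      have : 1 ≤ n := Nat.one_le_iff_ne_zero.mpr hn
      omega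
    calc b - a ≤ (Multiset.card (XB - XA) : ℤ) * ((n : ℤ) - 1) := h1
      _ ≤ (d : ℤ) * ((n : ℤ) - 1) := by
          apply mul_le_mul_of_nonneg_right _ hn1
          exact_mod_cast hmd
end

section
/- Every injective connected layer multicomplex of rank d on n elements (i.e., one in which every layer contains exactly one facet) has length at most d(n−1). -/
/-- Every injective connected layer multicomplex of rank `d` on `n` elements (one in
which every layer contains exactly one facet) has length at most `d(n−1)`. -/
theorem injective_clm_length_le (n d : ℕ) (a b : ℤ) (L : ℤ → Set (Multiset (Fin n)))
    (hM : IsCLM n d a b L)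
    (hinj : ∀ i : ℤ, a ≤ i → i ≤ b → ∃ X, L i = {X}) :
    b - a ≤ (d : ℤ) * ((n : ℤ) - 1) := by
  classical
  obtain ⟨hab, hcard, hne, hdisj, hconn⟩ := hM
  set N : ℕ := (b - a).toNat with hN
  have hbN : b = a + N := by omega
  have hX : ∀ t : ℕ, t ≤ N → ∃ Y, L (a + t) = {Y} := fun t ht =>
    hinj _ (by omega) (by omega)
  set F : ℕ → Multiset (Fin n) := fun t => if h : t ≤ N then (hX t h).choose else 0 with hF
  have hFL : ∀ t, t ≤ N → L (a + t) = {F t} := by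
    intro t ht
    simp only [hF, dif_pos ht]
    exact (hX t ht).choose_spec
  have hFmem : ∀ t, t ≤ N → F t ∈ L (a + t) := by
    intro t ht; rw [hFL t ht]; exact Set.mem_singleton _
  have hFuniq : ∀ t, t ≤ N → ∀ Y, Y ∈ L (a + t) → Y = F t := by
    intro t ht Y hY; rw [hFL t ht] at hY; exact hY
  have hFcard : ∀ t, t ≤ N → Multiset.card (F t) = d := fun t ht =>
    hcard _ _ (hFmem t ht)
  set m : Fin n → ℕ → ℕ := fun e t => (F t).count e with hm
  -- unimodality
  have unimod : ∀ (e : Fin n) (s t u : ℕ), s ≤ t → t ≤ u → u ≤ N →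
      min (m e s) (m e u) ≤ m e t := by
    intro e s t u hst htu huN
    set k := min (m e s) (m e u) with hk
    have hrep1 : Multiset.replicate k e ≤ F s :=
      Multiset.le_count_iff_replicate_le.mp (min_le_left _ _)
    have hrep2 : Multiset.replicate k e ≤ F u :=
      Multiset.le_count_iff_replicate_le.mp (min_le_right _ _)
    obtain ⟨Y, hYmem, hYle⟩ := hconn (Multiset.replicate k e) (a + s) (a + t) (a + u)
      (by omega) (by omega) ⟨F s, hFmem s (by omega), hrep1⟩ ⟨F u, hFmem u huN, hrep2⟩
    have : Y = F t := hFuniq t (by omega) Y hYmem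
    rw [this] at hYle
    exact Multiset.le_count_iff_replicate_le.mpr hYle
  -- no increase after a decrease
  have noinc : ∀ (e : Fin n) (s t : ℕ), s < t → t < N →
      m e (s + 1) < m e s → m e (t + 1) ≤ m e t := by
    intro e s t hst htN hdec
    have h1 := unimod e s (s + 1) (t + 1) (by omega) (by omega) (by omega)
    have h2 := unimod e (s + 1) t (t + 1) (by omega) (by omega) (by omega)
    omega
  -- card as sum of counts
  have hsum : ∀ s : Multiset (Fin n), ∑ e : Fin n, s.count e = Multiset.card s := by
    intro s
    rw [← Multiset.toFinset_sum_count_eq]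
    exact (Finset.sum_subset (Finset.subset_univ s.toFinset) (fun e _ he =>
      Multiset.count_eq_zero_of_notMem (fun h => he (Multiset.mem_toFinset.mpr h)))).symm
  -- each step has an increase
  have stepinc : ∀ t : ℕ, t < N → ∃ e : Fin n, m e t < m e (t + 1) := by
    intro t htN
    by_contra h
    push_neg at h
    have hsums : ∑ e : Fin n, m e (t + 1) = ∑ e : Fin n, m e t := by
      simp only [hm]
      rw [hsum, hsum, hFcard t (by omega), hFcard (t + 1) (by omega)]
    have heq : ∀ e : Fin n, m e t = m e (t + 1) := by
      intro e
      have := (Finset.sum_eq_sum_iff_of_le (fun e _ => h e)).mp hsums e (Finset.mem_univ e)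
      omega
    have hFeq : F t = F (t + 1) := Multiset.ext.mpr fun e => heq e
    have h1 := hFmem t (by omega)
    have h2 := hFmem (t + 1) (by omega)
    rw [← hFeq] at h2
    have := hdisj _ _ _ h1 h2
    have : (t : ℤ) = (t : ℤ) + 1 := by push_cast at this ⊢; omega
    omega
  -- total increase bound per element
  have hC : ∀ e : Fin n, (∑ t ∈ Finset.range N, (m e (t + 1) - m e t)) + m e 0 ≤ d := by
    intro e
    have key : ∀ j, j ≤ N → (∑ t ∈ Finset.range j, (m e (t + 1) - m e t)) + m e 0 ≤ d := by
      intro j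
      induction j with
      | zero =>
        intro _
        simpa using (hFcard 0 (by omega)) ▸ Multiset.count_le_card e (F 0)
      | succ j ih =>
        intro hjN
        rw [Finset.sum_range_succ]
        by_cases hinc : m e (j + 1) ≤ m e j
        · have : m e (j + 1) - m e j = 0 := by omega
          rw [this]
          simpa using ih (by omega)
        · push_neg at hinc
          have hmono : ∀ t, t ≤ j → m e t ≤ m e (t + 1) := by
            intro t ht
            rcases eq_or_lt_of_le ht with rfl | hlt
            · exact hinc.le
            · by_contra hd
              push_neg at hd
              exact absurd (noinc e t j hlt (by omega) hd) (by omega)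
          have tel : ∀ k, k ≤ j + 1 →
              (∑ t ∈ Finset.range k, (m e (t + 1) - m e t)) + m e 0 = m e k := by
            intro k
            induction k with
            | zero => intro _; simp
            | succ k ihk =>
              intro hk
              rw [Finset.sum_range_succ]
              have := ihk (by omega)
              have := hmono k (by omega)
              omega
          have := tel (j + 1) le_rfl
          rw [Finset.sum_range_succ] at this
          have hle : m e (j + 1) ≤ d := (hFcard (j + 1) hjN) ▸ Multiset.count_le_card e (F (j + 1))
          omega
    exact key N le_rfl
  -- combine
  have hNle : N ≤ ∑ e : Fin n, ∑ t ∈ Finset.range N, (m e (t + 1) - m e t) := by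
    rw [← Finset.sum_comm]
    calc N = ∑ _t ∈ Finset.range N, 1 := by simp
    _ ≤ ∑ t ∈ Finset.range N, ∑ e : Fin n, (m e (t + 1) - m e t) := by
        apply Finset.sum_le_sum
        intro t ht
        obtain ⟨e, he⟩ := stepinc t (Finset.mem_range.mp ht)
        calc 1 ≤ m e (t + 1) - m e t := by omega
        _ ≤ ∑ e : Fin n, (m e (t + 1) - m e t) :=
            Finset.single_le_sum (f := fun e => m e (t + 1) - m e t) (fun e _ => Nat.zero_le _) (Finset.mem_univ e)
  have hsum0 : ∑ e : Fin n, m e 0 = d := by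
    simp only [hm]; rw [hsum, hFcard 0 (by omega)]
  have hfin : N + d ≤ n * d := by
    calc N + d ≤ (∑ e : Fin n, ∑ t ∈ Finset.range N, (m e (t + 1) - m e t))
        + ∑ e : Fin n, m e 0 := by omega
    _ = ∑ e : Fin n, ((∑ t ∈ Finset.range N, (m e (t + 1) - m e t)) + m e 0) := by
        rw [Finset.sum_add_distrib]
    _ ≤ ∑ _e : Fin n, d := Finset.sum_le_sum fun e _ => hC e
    _ = n * d := by simp [Finset.card_univ]
  have : ((N : ℤ)) + d ≤ (n : ℤ) * d := by exact_mod_cast hfin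
  nlinarith [this, hbN]
end

section
/- Let f(n,d) = H_clm(n,d) + 1, where H_clm(n,d) is the maximum length of connected layer multicomplexes of rank d on n elements. Then f(n,d) ≤ 2·f(⌊n/2⌋, d) + f(n, d−1) for all n, d ≥ 2. -/
open Classical in
noncomputable def layerSupport {n : ℕ} (L : ℤ → Set (Multiset (Fin n))) (s t : ℤ) :
    Finset (Fin n) :=
  Finset.univ.filter fun x => ∃ i, s ≤ i ∧ i ≤ t ∧ ∃ X ∈ L i, x ∈ X

section layerSupport

variable {n : ℕ} {L : ℤ → Set (Multiset (Fin n))} {s t : ℤ}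

theorem mem_layerSupport {x : Fin n} :
    x ∈ layerSupport L s t ↔ ∃ i, s ≤ i ∧ i ≤ t ∧ ∃ X ∈ L i, x ∈ X := by
  simp [layerSupport]

theorem layerSupport_eq_empty (h : t < s) : layerSupport L s t = ∅ :=
  Finset.eq_empty_of_forall_notMem fun _ hx => by
    obtain ⟨i, hsi, hit, -⟩ := mem_layerSupport.1 hx
    omega

theorem exists_maximal_prefix (L : ℤ → Set (Multiset (Fin n))) {a b : ℤ} (hab : a ≤ b) (m : ℕ) :
    ∃ p, a ≤ p + 1 ∧ p ≤ b ∧ (layerSupport L a p).card ≤ m ∧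
      (p < b → m < (layerSupport L a (p + 1)).card) := by
  classical
  obtain ⟨p, ⟨hap, hpb, hp⟩, hmax⟩ := Int.exists_greatest_of_bdd
    (P := fun z => a ≤ z + 1 ∧ z ≤ b ∧ (layerSupport L a z).card ≤ m)
    ⟨b, fun _ hz => hz.2.1⟩
    ⟨a - 1, by omega, by omega, by simp [layerSupport_eq_empty (show a - 1 < a by omega)]⟩
  refine ⟨p, hap, hpb, hp, fun hpb' => ?_⟩
  by_contra! hcard
  have := hmax (p + 1) ⟨by omega, by omega, hcard⟩
  omega

theorem exists_minimal_suffix (L : ℤ → Set (Multiset (Fin n))) {a b : ℤ} (hab : a ≤ b) (m : ℕ) :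
    ∃ q, a ≤ q ∧ q ≤ b + 1 ∧ (layerSupport L q b).card ≤ m ∧
      (a < q → m < (layerSupport L (q - 1) b).card) := by
  classical
  obtain ⟨q, ⟨haq, hqb, hq⟩, hmin⟩ := Int.exists_least_of_bdd
    (P := fun z => a ≤ z ∧ z ≤ b + 1 ∧ (layerSupport L z b).card ≤ m)
    ⟨a, fun _ hz => hz.1⟩
    ⟨b + 1, by omega, by omega, by simp [layerSupport_eq_empty (show b < b + 1 by omega)]⟩
  refine ⟨q, haq, hqb, hq, fun haq' => ?_⟩
  by_contra! hcard
  have := hmin (q - 1) ⟨by omega, by omega, hcard⟩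
  omega

end layerSupport

namespace IsCLM

variable {n d : ℕ} {a b : ℤ} {L : ℤ → Set (Multiset (Fin n))}

theorem length_le_card_sym (h : IsCLM n d a b L) :
    (b - a).toNat ≤ Fintype.card (Sym (Fin n) d) := by
  obtain ⟨-, hcard, hne, hdisj, -⟩ := h
  have hfacet : ∀ i : Finset.Icc a b, ∃ X : Sym (Fin n) d, (X : Multiset (Fin n)) ∈ L i := by
    rintro ⟨i, hi⟩
    obtain ⟨X, hX⟩ := (hne i).2 (Finset.mem_Icc.1 hi)
    exact ⟨⟨X, hcard i X hX⟩, hX⟩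
  choose facet hfacet using hfacet
  have hinj : Function.Injective facet := fun i j hij =>
    Subtype.ext <| hdisj i j _ (hfacet i) (hij ▸ hfacet j)
  have := Fintype.card_le_of_injective facet hinj
  rw [Fintype.card_coe, Int.card_Icc] at this
  omega

theorem length_le_Hclm (h : IsCLM n d a b L) : (b - a).toNat ≤ Hclm n d :=
  le_csSup ⟨Fintype.card (Sym (Fin n) d), fun _ ⟨_, _, _, h', hl⟩ => hl ▸ h'.length_le_card_sym⟩
    ⟨a, b, L, h, rfl⟩

theorem sub_le_Hclm (h : IsCLM n d a b L) : b - a ≤ Hclm n d := by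
  have := h.length_le_Hclm
  have := h.1
  omega

theorem restrict (h : IsCLM n d a b L) {s t : ℤ} (hs : a ≤ s) (hst : s ≤ t) (ht : t ≤ b) :
    IsCLM n d s t (fun i => {X | X ∈ L i ∧ s ≤ i ∧ i ≤ t}) := by
  obtain ⟨-, hcard, hne, hdisj, hconn⟩ := h
  refine ⟨hst, fun i X hX => hcard i X hX.1, fun i => ⟨?_, ?_⟩,
    fun i j X hXi hXj => hdisj i j X hXi.1 hXj.1, ?_⟩
  · rintro ⟨X, -, hi⟩
    exact hi
  · rintro hi
    obtain ⟨X, hX⟩ := (hne i).2 ⟨hs.trans hi.1, hi.2.trans ht⟩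
    exact ⟨X, hX, hi⟩
  · rintro S i j k hij hjk ⟨X, ⟨hX, hsi, -⟩, hSX⟩ ⟨Z, ⟨hZ, -, hkt⟩, hSZ⟩
    obtain ⟨Y, hY, hSY⟩ := hconn S i j k hij hjk ⟨X, hX, hSX⟩ ⟨Z, hZ, hSZ⟩
    exact ⟨Y, ⟨hY, hsi.trans hij, hjk.trans hkt⟩, hSY⟩

theorem map {m : ℕ} (h : IsCLM n d a b L) (g : Fin n → Fin m) (g' : Fin m → Fin n)
    (hg : ∀ i, ∀ X ∈ L i, ∀ x ∈ X, g' (g x) = x) :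
    IsCLM m d a b (fun i => Multiset.map g '' L i) := by
  obtain ⟨hab, hcard, hne, hdisj, hconn⟩ := h
  have retract : ∀ i, ∀ X ∈ L i, Multiset.map g' (Multiset.map g X) = X := fun i X hX => by
    rw [Multiset.map_map]
    exact (Multiset.map_congr rfl fun x hx => hg i X hX x hx).trans (Multiset.map_id' X)
  have section_eq : ∀ i, ∀ X ∈ L i, ∀ S ≤ Multiset.map g X,
      Multiset.map g (Multiset.map g' S) = S := fun i X hX S hS => by
    rw [Multiset.map_map]
    refine (Multiset.map_congr rfl fun s hs => ?_).trans (Multiset.map_id' S)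
    obtain ⟨x, hx, rfl⟩ := Multiset.mem_map.1 (Multiset.mem_of_le hS hs)
    simp [hg i X hX x hx]
  have pullback : ∀ i, ∀ X ∈ L i, ∀ S ≤ Multiset.map g X, Multiset.map g' S ≤ X :=
    fun i X hX S hS => retract i X hX ▸ Multiset.map_le_map hS
  refine ⟨hab, ?_, fun i => Set.image_nonempty.trans (hne i), ?_, ?_⟩
  · rintro i _ ⟨X, hX, rfl⟩
    rw [Multiset.card_map]
    exact hcard i X hX
  · rintro i j _ ⟨X, hX, rfl⟩ ⟨Y, hY, hYX⟩
    have hXY : Y = X := by rw [← retract j Y hY, hYX, retract i X hX]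
    exact hdisj i j X hX (hXY ▸ hY)
  · rintro S i j k hij hjk ⟨_, ⟨X, hX, rfl⟩, hSX⟩ ⟨_, ⟨Z, hZ, rfl⟩, hSZ⟩
    obtain ⟨Y, hY, hSY⟩ := hconn (Multiset.map g' S) i j k hij hjk
      ⟨X, hX, pullback i X hX S hSX⟩ ⟨Z, hZ, pullback k Z hZ S hSZ⟩
    refine ⟨Multiset.map g Y, ⟨Y, hY, rfl⟩, ?_⟩
    exact section_eq i X hX S hSX ▸ Multiset.map_le_map hSY

theorem sub_le_Hclm_of_forall_mem {m : ℕ} (h : IsCLM n d a b L) (hd : d ≠ 0)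
    {A : Finset (Fin n)} (hA : ∀ i, ∀ X ∈ L i, ∀ x ∈ X, x ∈ A) (hAm : A.card ≤ m) :
    b - a ≤ Hclm m d := by
  classical
  obtain ⟨X, hX⟩ := (h.2.2.1 a).2 ⟨le_rfl, h.1⟩
  obtain ⟨x₀, hx₀⟩ := Multiset.card_pos_iff_exists_mem.1 (by rw [h.2.1 a X hX]; omega)
  obtain ⟨f⟩ := Function.Embedding.nonempty_of_card_le (α := A) (β := Fin m) (by simpa)
  have : Nonempty (Fin n) := ⟨x₀⟩
  have : Nonempty (Fin m) := ⟨f ⟨x₀, hA a X hX x₀ hx₀⟩⟩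
  let g : Fin n → Fin m := fun x => if hx : x ∈ A then f ⟨x, hx⟩ else Classical.arbitrary _
  have hinj : Set.InjOn g A := fun x hx y hy hxy => by
    rw [Finset.mem_coe] at hx hy
    simp only [g, dif_pos hx, dif_pos hy] at hxy
    exact congrArg Subtype.val (f.injective hxy)
  exact (h.map g (Function.invFunOn g A) fun i X hX x hx =>
    hinj.leftInvOn_invFunOn (hA i X hX x hx)).sub_le_Hclm

theorem sub_le_Hclm_of_card_layerSupport_le {m : ℕ} (h : IsCLM n d a b L) (hd : d ≠ 0)
    {s t : ℤ} (hs : a ≤ s) (ht : t ≤ b) (hcard : (layerSupport L s t).card ≤ m) :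
    t - s ≤ Hclm m d := by
  rcases lt_or_ge t s with hts | hst
  · omega
  refine (h.restrict hs hst ht).sub_le_Hclm_of_forall_mem hd (fun i X hX x hx => ?_) hcard
  exact mem_layerSupport.2 ⟨i, hX.2.1, hX.2.2, X, hX.1, hx⟩

theorem link (h : IsCLM n d a b L) {x : Fin n} {i₀ i₁ : ℤ}
    (h₀ : IsLeast {i | ∃ X ∈ L i, x ∈ X} i₀) (h₁ : IsGreatest {i | ∃ X ∈ L i, x ∈ X} i₁) :
    IsCLM n (d - 1) i₀ i₁ (fun i => {Y | x ::ₘ Y ∈ L i}) := by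
  obtain ⟨-, hcard, -, hdisj, hconn⟩ := h
  refine ⟨h₁.2 h₀.1, fun i Y hY => ?_, fun i => ⟨?_, ?_⟩,
    fun i j Y hYi hYj => hdisj i j _ hYi hYj, ?_⟩
  · have := hcard i _ hY
    rw [Multiset.card_cons] at this
    omega
  · rintro ⟨Y, hY⟩
    have hx : ∃ X ∈ L i, x ∈ X := ⟨x ::ₘ Y, hY, Multiset.mem_cons_self x Y⟩
    exact ⟨h₀.2 hx, h₁.2 hx⟩
  · rintro ⟨hi₀, hi₁⟩
    obtain ⟨X₀, hX₀, hx₀⟩ := h₀.1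
    obtain ⟨X₁, hX₁, hx₁⟩ := h₁.1
    obtain ⟨X, hX, hxX⟩ := hconn {x} i₀ i i₁ hi₀ hi₁
      ⟨X₀, hX₀, Multiset.singleton_le.2 hx₀⟩ ⟨X₁, hX₁, Multiset.singleton_le.2 hx₁⟩
    exact ⟨X.erase x, by rwa [Set.mem_ofPred_eq, Multiset.cons_erase (Multiset.singleton_le.1 hxX)]⟩
  · rintro S i j k hij hjk ⟨Y, hY, hSY⟩ ⟨Z, hZ, hSZ⟩
    obtain ⟨X, hX, hSX⟩ := hconn (x ::ₘ S) i j k hij hjk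
      ⟨_, hY, Multiset.cons_le_cons x hSY⟩ ⟨_, hZ, Multiset.cons_le_cons x hSZ⟩
    have hxX : x ∈ X := Multiset.mem_of_le hSX (Multiset.mem_cons_self x S)
    refine ⟨X.erase x, by rwa [Set.mem_ofPred_eq, Multiset.cons_erase hxX], ?_⟩
    rwa [← Multiset.cons_le_cons_iff x, Multiset.cons_erase hxX]

theorem sub_le_Hclm_pred_of_mem (h : IsCLM n d a b L) {x : Fin n} {i j : ℤ} {X Y : Multiset (Fin n)}
    (hX : X ∈ L i) (hxX : x ∈ X) (hY : Y ∈ L j) (hxY : x ∈ Y) : j - i ≤ Hclm n (d - 1) := by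
  classical
  have hbdd : ∀ k, (∃ Z ∈ L k, x ∈ Z) → a ≤ k ∧ k ≤ b := fun k ⟨Z, hZ, _⟩ =>
    (h.2.2.1 k).1 ⟨Z, hZ⟩
  obtain ⟨i₀, h₀, hmin⟩ := Int.exists_least_of_bdd ⟨a, fun k hk => (hbdd k hk).1⟩ ⟨i, X, hX, hxX⟩
  obtain ⟨i₁, h₁, hmax⟩ := Int.exists_greatest_of_bdd ⟨b, fun k hk => (hbdd k hk).2⟩ ⟨i, X, hX, hxX⟩
  have := (h.link ⟨h₀, fun k hk => hmin k hk⟩ ⟨h₁, fun k hk => hmax k hk⟩).sub_le_Hclm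
  have := hmin i ⟨X, hX, hxX⟩
  have := hmax j ⟨Y, hY, hxY⟩
  omega

theorem sub_le_two_mul_Hclm_half_add_Hclm_pred (h : IsCLM n d a b L) (hd : d ≠ 0) :
    b - a ≤ 2 * Hclm (n / 2) d + Hclm n (d - 1) + 2 := by
  obtain ⟨p, hap, hpb, hp, hp_max⟩ := exists_maximal_prefix L h.1 (n / 2)
  obtain ⟨q, haq, hqb, hq, hq_min⟩ := exists_minimal_suffix L h.1 (n / 2)
  have hprefix := h.sub_le_Hclm_of_card_layerSupport_le hd le_rfl hpb hp
  have hsuffix := h.sub_le_Hclm_of_card_layerSupport_le hd haq le_rfl hq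
  rcases eq_or_lt_of_le hpb with rfl | hpb'
  · omega
  rcases eq_or_lt_of_le haq with rfl | haq'
  · omega
  obtain ⟨x, hx⟩ := Finset.inter_nonempty_of_card_lt_card_add_card
    (Finset.subset_univ (layerSupport L a (p + 1))) (Finset.subset_univ (layerSupport L (q - 1) b))
    (by have := hp_max hpb'; have := hq_min haq'; simp; omega)
  rw [Finset.mem_inter, mem_layerSupport, mem_layerSupport] at hx
  obtain ⟨⟨i, -, hip, X, hX, hxX⟩, ⟨j, hqj, -, Y, hY, hxY⟩⟩ := hx
  have hmiddle := h.sub_le_Hclm_pred_of_mem hX hxX hY hxY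
  omega

end IsCLM

theorem Hclm_recursion_general (n d : ℕ) (hd : 2 ≤ d) :
    Hclm n d + 1 ≤ 2 * (Hclm (n / 2) d + 1) + (Hclm n (d - 1) + 1) := by
  have : Hclm n d ≤ 2 * Hclm (n / 2) d + Hclm n (d - 1) + 2 := by
    refine csSup_le' ?_
    rintro _ ⟨a, b, L, h, rfl⟩
    have := h.sub_le_two_mul_Hclm_half_add_Hclm_pred (by omega)
    omega
  omega

/-- With `f(n,d) = H_clm(n,d) + 1`, the recursion
`f(n,d) ≤ 2·f(⌊n/2⌋, d) + f(n, d−1)` holds for all `n, d ≥ 2`. -/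
theorem Hclm_recursion (n d : ℕ) (hn : 2 ≤ n) (hd : 2 ≤ d) :
    Hclm n d + 1 ≤ 2 * (Hclm (n / 2) d + 1) + (Hclm n (d - 1) + 1) :=
  Hclm_recursion_general n d hd
end

section
/- For all n, d ≥ 2, H_clm(n,d) ≤ n^{log₂ d + 1} − 1 (Kalai–Kleitman-type bound for connected layer multicomplexes). -/
/-!
Let `f(m, d)` bound the number of layers of a connected layer multicomplex of rank `d` whose
facets use at most `m` vertices. Take the longest initial run of layers using at most `⌊m/2⌋`
vertices and the longest final run using at most `⌊(m-1)/2⌋`. Extended by one layer each, the two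
runs use more than `m` vertices together, so they share a vertex `e`; every layer strictly between
them then lies between two layers of the star of `e`, and the link of `e` is a connected layer
multicomplex of rank `d - 1`. Hence `f(m, d) ≤ f(⌊m/2⌋, d) + f(⌊(m-1)/2⌋, d) + f(m, d - 1)`, with
`f(m, 0) = 1`. Unrolling this for `2^ℓ ≤ d < 2^(ℓ+1)` down to rank `2^ℓ - 1` gives
`f(m, d) ≤ 2^ℓ (⌊m/2⌋^(ℓ+1) + ⌊(m-1)/2⌋^(ℓ+1)) + m^ℓ ≤ m^(ℓ+1)`.

Counting the vertices actually used, rather than the size of the ground set, lets the pieces stay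
on the same ground set `Fin n`, so no relabelling is needed.
-/

open Finset

def restrictLayers {n : ℕ} (L : ℤ → Set (Multiset (Fin n))) (s : Set ℤ) :
    ℤ → Set (Multiset (Fin n)) :=
  fun i => {X | i ∈ s ∧ X ∈ L i}

def linkLayers {n : ℕ} (L : ℤ → Set (Multiset (Fin n))) (e : Fin n) :
    ℤ → Set (Multiset (Fin n)) :=
  fun i => {Y | e ::ₘ Y ∈ L i}

def IsSupportedIn {n : ℕ} (L : ℤ → Set (Multiset (Fin n))) (T : Finset (Fin n)) : Prop :=
  ∀ i, ∀ X ∈ L i, ∀ x ∈ X, x ∈ T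

open Classical in
noncomputable def vertices {n : ℕ} (L : ℤ → Set (Multiset (Fin n))) (s : Set ℤ) :
    Finset (Fin n) :=
  univ.filter fun x => ∃ i ∈ s, ∃ X ∈ L i, x ∈ X

section Layers

variable {n d : ℕ} {a b : ℤ} {L : ℤ → Set (Multiset (Fin n))} {T : Finset (Fin n)}

theorem mem_vertices {s : Set ℤ} {x : Fin n} :
    x ∈ vertices L s ↔ ∃ i ∈ s, ∃ X ∈ L i, x ∈ X := by
  simp [vertices]

@[simp]
theorem vertices_empty : vertices L ∅ = ∅ := by
  simp [vertices]

theorem isSupportedIn_restrictLayers (s : Set ℤ) :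
    IsSupportedIn (restrictLayers L s) (vertices L s) :=
  fun i X hX _ hx => mem_vertices.2 ⟨i, hX.1, X, hX.2, hx⟩

theorem IsSupportedIn.vertices_subset (hT : IsSupportedIn L T) (s : Set ℤ) :
    vertices L s ⊆ T := by
  intro x hx
  obtain ⟨i, -, X, hX, hx⟩ := mem_vertices.1 hx
  exact hT i X hX x hx

theorem IsSupportedIn.linkLayers (hT : IsSupportedIn L T) (e : Fin n) :
    IsSupportedIn (linkLayers L e) T :=
  fun i _ hY x hx => hT i _ hY x (Multiset.mem_cons_of_mem hx)

theorem exists_mem_linkLayers_le_iff {e : Fin n} {i : ℤ} {S : Multiset (Fin n)} :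
    (∃ Y ∈ linkLayers L e i, S ≤ Y) ↔ ∃ X ∈ L i, e ::ₘ S ≤ X := by
  constructor
  · rintro ⟨Y, hY, hSY⟩
    exact ⟨_, hY, Multiset.cons_le_cons e hSY⟩
  · rintro ⟨X, hX, hSX⟩
    obtain ⟨u, rfl⟩ := Multiset.le_iff_exists_add.1 hSX
    exact ⟨S + u, by simpa [linkLayers, Multiset.cons_add] using hX, Multiset.le_add_right S u⟩

namespace IsCLM

theorem restrict_s14 (h : IsCLM n d a b L) {a' b' : ℤ} (ha : a ≤ a') (hab : a' ≤ b') (hb : b' ≤ b) :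
    IsCLM n d a' b' (restrictLayers L (Set.Icc a' b')) := by
  obtain ⟨-, hcard, hne, hdisj, hconn⟩ := h
  refine ⟨hab, fun i X hX => hcard i X hX.2, fun i => ?_,
    fun i j X hi hj => hdisj i j X hi.2 hj.2, ?_⟩
  · have : (restrictLayers L (Set.Icc a' b') i).Nonempty ↔
        i ∈ Set.Icc a' b' ∧ (L i).Nonempty := by
      simp [restrictLayers, Set.Nonempty]
    rw [this, hne, Set.mem_Icc]
    omega
  · rintro S i j k hij hjk ⟨X, ⟨hi, hX⟩, hSX⟩ ⟨Y, ⟨hk, hY⟩, hSY⟩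
    obtain ⟨Z, hZ, hSZ⟩ := hconn S i j k hij hjk ⟨X, hX, hSX⟩ ⟨Y, hY, hSY⟩
    exact ⟨Z, ⟨⟨hi.1.trans hij, hjk.trans hk.2⟩, hZ⟩, hSZ⟩

theorem link_s14 (h : IsCLM n d a b L) {e : Fin n} (he : ∃ i, ∃ X ∈ L i, e ∈ X) :
    ∃ p q, IsCLM n (d - 1) p q (linkLayers L e) ∧
      ∀ i, (∃ X ∈ L i, e ∈ X) → p ≤ i ∧ i ≤ q := by
  obtain ⟨-, hcard, hne, hdisj, hconn⟩ := h
  have hstar (i : ℤ) : (linkLayers L e i).Nonempty ↔ ∃ X ∈ L i, e ∈ X := by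
    simpa [Set.Nonempty] using exists_mem_linkLayers_le_iff (L := L) (e := e) (i := i) (S := 0)
  have hbdd (i : ℤ) : (∃ X ∈ L i, e ∈ X) → a ≤ i ∧ i ≤ b := fun ⟨X, hX, _⟩ => (hne i).1 ⟨X, hX⟩
  obtain ⟨p, hp, hpmin⟩ := Int.exists_least_of_bdd ⟨a, fun i hi => (hbdd i hi).1⟩ he
  obtain ⟨q, hq, hqmax⟩ := Int.exists_greatest_of_bdd ⟨b, fun i hi => (hbdd i hi).2⟩ he
  refine ⟨p, q, ⟨hpmin q hq, fun i Y hY => ?_, fun i => ?_, fun i j Y => hdisj i j _, ?_⟩,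
    fun i hi => ⟨hpmin i hi, hqmax i hi⟩⟩
  · have := hcard i _ hY
    rw [Multiset.card_cons] at this
    omega
  · rw [hstar]
    refine ⟨fun hi => ⟨hpmin i hi, hqmax i hi⟩, fun ⟨hpi, hiq⟩ => ?_⟩
    simpa using hconn {e} p i q hpi hiq (by simpa using hp) (by simpa using hq)
  · intro S i j k hij hjk hi hk
    rw [exists_mem_linkLayers_le_iff] at hi hk ⊢
    exact hconn _ i j k hij hjk hi hk

theorem eq_of_rank_zero (h : IsCLM n 0 a b L) : a = b := by
  obtain ⟨hab, hcard, hne, hdisj, -⟩ := h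
  obtain ⟨X, hX⟩ := (hne a).2 ⟨le_rfl, hab⟩
  obtain ⟨Y, hY⟩ := (hne b).2 ⟨hab, le_rfl⟩
  rw [Multiset.card_eq_zero.1 (hcard a X hX)] at hX
  rw [Multiset.card_eq_zero.1 (hcard b Y hY)] at hY
  exact hdisj a b 0 hX hY

theorem nonempty_of_isSupportedIn (h : IsCLM n d a b L) (hd : d ≠ 0)
    (hT : IsSupportedIn L T) : T.Nonempty := by
  obtain ⟨X, hX⟩ := (h.2.2.1 a).2 ⟨le_rfl, h.1⟩
  obtain ⟨x, hx⟩ := Multiset.card_pos_iff_exists_mem.1 (by rw [h.2.1 a X hX]; omega)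
  exact ⟨x, hT a X hX x hx⟩

end IsCLM

end Layers

def LayerBound (m d K : ℕ) : Prop :=
  ∀ ⦃n : ℕ⦄ ⦃a b : ℤ⦄ ⦃L : ℤ → Set (Multiset (Fin n))⦄ ⦃T : Finset (Fin n)⦄,
    IsCLM n d a b L → IsSupportedIn L T → #T ≤ m → b - a + 1 ≤ K

theorem layerBound_rank_zero (m : ℕ) : LayerBound m 0 1 := by
  intro n a b L T h _ _
  have := h.eq_of_rank_zero
  omega

theorem layerBound_zero_of_ne_zero {d : ℕ} (hd : d ≠ 0) (K : ℕ) : LayerBound 0 d K := by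
  intro n a b L T h hT hT0
  have := (h.nonempty_of_isSupportedIn hd hT).card_pos
  omega

namespace LayerBound

variable {m d K K₁ K₂ K₃ : ℕ}

theorem mono (h : LayerBound m d K) {K' : ℕ} (hK : K ≤ K') : LayerBound m d K' :=
  fun _ _ _ _ _ hL hT hTm => (h hL hT hTm).trans (by exact_mod_cast hK)

theorem le_of_card_vertices_le (hK : LayerBound m d K) {n : ℕ} {a b a' b' : ℤ}
    {L : ℤ → Set (Multiset (Fin n))} (h : IsCLM n d a b L) (ha : a ≤ a') (hb : b' ≤ b)
    (hm : #(vertices L (Set.Icc a' b')) ≤ m) : b' - a' + 1 ≤ K := by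
  rcases lt_or_ge b' a' with hba | hab
  · omega
  · exact hK (h.restrict_s14 ha hab hb) (isSupportedIn_restrictLayers _) hm

theorem le_of_mem_of_mem (hK : LayerBound m (d - 1) K) {n : ℕ} {a b i j : ℤ}
    {L : ℤ → Set (Multiset (Fin n))} {T : Finset (Fin n)} (h : IsCLM n d a b L)
    (hT : IsSupportedIn L T) (hm : #T ≤ m) {e : Fin n} (hi : ∃ X ∈ L i, e ∈ X)
    (hj : ∃ X ∈ L j, e ∈ X) : j - i + 1 ≤ K := by
  obtain ⟨p, q, hlink, hpq⟩ := h.link_s14 ⟨i, hi⟩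
  have := hK hlink (hT.linkLayers e) hm
  have := hpq i hi
  have := hpq j hj
  omega

theorem split (h₁ : LayerBound (m / 2) d K₁) (h₂ : LayerBound ((m - 1) / 2) d K₂)
    (h₃ : LayerBound m (d - 1) K₃) : LayerBound m d (K₁ + K₂ + K₃) := by
  intro n a b L T h hT hm
  -- `i₀ = a - 1` and `j₀ = b + 1` encode an empty initial or final run.
  obtain ⟨i₀, ⟨hi₀a, hi₀b, hi₀⟩, hi₀max⟩ := Int.exists_greatest_of_bdd
    (P := fun i => a - 1 ≤ i ∧ i ≤ b ∧ #(vertices L (Set.Icc a i)) ≤ m / 2)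
    ⟨b, fun i hi => hi.2.1⟩ ⟨a - 1, le_rfl, by have := h.1; omega, by simp⟩
  obtain ⟨j₀, ⟨hj₀a, hj₀b, hj₀⟩, hj₀min⟩ := Int.exists_least_of_bdd
    (P := fun j => a ≤ j ∧ j ≤ b + 1 ∧ #(vertices L (Set.Icc j b)) ≤ (m - 1) / 2)
    ⟨a, fun j hj => hj.1⟩ ⟨b + 1, by have := h.1; omega, le_rfl, by simp⟩
  have hleft : i₀ - a + 1 ≤ K₁ := h₁.le_of_card_vertices_le h le_rfl hi₀b hi₀
  have hright : b - j₀ + 1 ≤ K₂ := h₂.le_of_card_vertices_le h hj₀a le_rfl hj₀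
  suffices hmid : j₀ - i₀ - 1 ≤ K₃ by push_cast; omega
  by_contra! hgap
  have hU : m / 2 < #(vertices L (Set.Icc a (i₀ + 1))) := by
    by_contra! hU
    have := hi₀max _ ⟨by omega, by omega, hU⟩
    omega
  have hV : (m - 1) / 2 < #(vertices L (Set.Icc (j₀ - 1) b)) := by
    by_contra! hV
    have := hj₀min _ ⟨by omega, by omega, hV⟩
    omega
  obtain ⟨e, he⟩ := Finset.inter_nonempty_of_card_lt_card_add_card
    (hT.vertices_subset (Set.Icc a (i₀ + 1))) (hT.vertices_subset (Set.Icc (j₀ - 1) b)) (by omega)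
  obtain ⟨heU, heV⟩ := Finset.mem_inter.1 he
  obtain ⟨t, ht, X, hX, heX⟩ := mem_vertices.1 heU
  obtain ⟨t', ht', X', hX', heX'⟩ := mem_vertices.1 heV
  have := h₃.le_of_mem_of_mem h hT hm ⟨X, hX, heX⟩ ⟨X', hX', heX'⟩
  rw [Set.mem_Icc] at ht ht'
  omega

theorem iterate {d₀ k : ℕ} (h₁ : ∀ d ∈ Set.Ioc d₀ (d₀ + k), LayerBound (m / 2) d K₁)
    (h₂ : ∀ d ∈ Set.Ioc d₀ (d₀ + k), LayerBound ((m - 1) / 2) d K₂)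
    (h₃ : LayerBound m d₀ K₃) : LayerBound m (d₀ + k) (k * (K₁ + K₂) + K₃) := by
  induction k with
  | zero => simpa using h₃
  | succ k ih =>
    have hk := ih (fun d hd => h₁ d ⟨hd.1, by have := hd.2; omega⟩)
      (fun d hd => h₂ d ⟨hd.1, by have := hd.2; omega⟩)
    exact ((h₁ _ ⟨by omega, le_rfl⟩).split (h₂ _ ⟨by omega, le_rfl⟩) hk).mono (le_of_eq (by ring))

end LayerBound

theorem two_pow_mul_pow_succ_le {m x : ℕ} (hx : 2 * x ≤ m) (ℓ : ℕ) :
    2 ^ ℓ * x ^ (ℓ + 1) ≤ x * m ^ ℓ :=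
  calc 2 ^ ℓ * x ^ (ℓ + 1) = x * (2 * x) ^ ℓ := by ring
    _ ≤ x * m ^ ℓ := by gcongr

theorem two_pow_mul_halves_pow_add_pow_le {m : ℕ} (hm : 1 ≤ m) (ℓ : ℕ) :
    2 ^ ℓ * ((m / 2) ^ (ℓ + 1) + ((m - 1) / 2) ^ (ℓ + 1)) + m ^ ℓ ≤ m ^ (ℓ + 1) := by
  have h₁ := two_pow_mul_pow_succ_le (show 2 * (m / 2) ≤ m by omega) ℓ
  have h₂ := two_pow_mul_pow_succ_le (show 2 * ((m - 1) / 2) ≤ m by omega) ℓ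
  have hsum : m / 2 + (m - 1) / 2 + 1 = m := by omega
  calc _ = 2 ^ ℓ * (m / 2) ^ (ℓ + 1) + 2 ^ ℓ * ((m - 1) / 2) ^ (ℓ + 1) + m ^ ℓ := by ring
    _ ≤ m / 2 * m ^ ℓ + (m - 1) / 2 * m ^ ℓ + m ^ ℓ := by gcongr
    _ = (m / 2 + (m - 1) / 2 + 1) * m ^ ℓ := by ring
    _ = m ^ (ℓ + 1) := by rw [hsum, pow_succ, mul_comm]

theorem layerBound_pow (ℓ : ℕ) : ∀ m, 1 ≤ m → ∀ d < 2 ^ ℓ, LayerBound m d (m ^ ℓ) := by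
  induction ℓ with
  | zero =>
    intro m _ d hd
    obtain rfl : d = 0 := by simpa using hd
    simpa using layerBound_rank_zero m
  | succ ℓ ih =>
    intro m
    induction m using Nat.strong_induction_on with
    | _ m ihm =>
    intro hm d hd
    have hsmaller : ∀ m' < m, ∀ d, 0 < d ∧ d < 2 ^ (ℓ + 1) → LayerBound m' d (m' ^ (ℓ + 1)) := by
      rintro m' hm' d ⟨hd₀, hd⟩
      rcases Nat.eq_zero_or_pos m' with rfl | hpos
      · exact layerBound_zero_of_ne_zero hd₀.ne' _
      · exact ihm m' hm' (by omega) d hd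
    rcases lt_or_ge d (2 ^ ℓ) with hdℓ | hdℓ
    · exact (ih m hm d hdℓ).mono (Nat.pow_le_pow_right hm ℓ.le_succ)
    obtain ⟨k, rfl⟩ : ∃ k, d = 2 ^ ℓ - 1 + k := ⟨d - (2 ^ ℓ - 1), by omega⟩
    have hk : k ≤ 2 ^ ℓ := by rw [pow_succ] at hd; omega
    have hrange : ∀ d ∈ Set.Ioc (2 ^ ℓ - 1) (2 ^ ℓ - 1 + k), 0 < d ∧ d < 2 ^ (ℓ + 1) := by
      intro d ⟨hd₁, hd₂⟩
      rw [pow_succ]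
      omega
    refine (LayerBound.iterate (fun d hd => hsmaller _ (by omega) d (hrange d hd))
      (fun d hd => hsmaller _ (by omega) d (hrange d hd))
      (ih m hm _ (Nat.sub_lt (Nat.two_pow_pos ℓ) one_pos))).mono ?_
    calc _ ≤ 2 ^ ℓ * ((m / 2) ^ (ℓ + 1) + ((m - 1) / 2) ^ (ℓ + 1)) + m ^ ℓ := by gcongr
      _ ≤ m ^ (ℓ + 1) := two_pow_mul_halves_pow_add_pow_le hm ℓ

theorem Hclm_kalai_kleitman_general (n d : ℕ) (hn : 2 ≤ n) :
    Hclm n d ≤ n ^ (Nat.log 2 d + 1) - 1 := by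
  refine csSup_le' ?_
  rintro _ ⟨a, b, L, h, rfl⟩
  have := layerBound_pow (Nat.log 2 d + 1) n (by omega) d (Nat.lt_pow_succ_log_self one_lt_two d)
    h (T := univ) (fun _ _ _ _ _ => mem_univ _) (by simp)
  omega

/-- Kalai–Kleitman-type bound: for all `n, d ≥ 2`,
`H_clm(n,d) ≤ n^{log₂ d + 1} − 1`. -/
theorem Hclm_kalai_kleitman (n d : ℕ) (hn : 2 ≤ n) (hd : 2 ≤ d) :
    Hclm n d ≤ n ^ (Nat.log 2 d + 1) - 1 :=
  Hclm_kalai_kleitman_general n d hn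
end

section
/- For all n ≥ 1 and d ≥ 1, H_clm(n,d) ≤ (n−1)·2^{d−1} (Larman–Barnette-type bound for connected layer multicomplexes). -/
open Classical

/-- `v` appears in some facet of layer `i`. -/
def App (n : ℕ) (L : ℤ → Set (Multiset (Fin n))) (v : Fin n) (i : ℤ) : Prop :=
  ∃ X ∈ L i, v ∈ X

lemma app_bounds {n d : ℕ} {a b : ℤ} {L : ℤ → Set (Multiset (Fin n))}
    (h : IsCLM n d a b L) {v : Fin n} {i : ℤ} (hv : App n L v i) :
    a ≤ i ∧ i ≤ b := by
  obtain ⟨X, hX, _⟩ := hv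
  exact (h.2.2.1 i).mp ⟨X, hX⟩

lemma app_interval {n d : ℕ} {a b : ℤ} {L : ℤ → Set (Multiset (Fin n))}
    (h : IsCLM n d a b L) {v : Fin n} {i j k : ℤ} (hij : i ≤ j) (hjk : j ≤ k)
    (hi : App n L v i) (hk : App n L v k) : App n L v j := by
  obtain ⟨X, hX, hvX⟩ := hi
  obtain ⟨Y, hY, hvY⟩ := hk
  obtain ⟨Z, hZ, hvZ⟩ := h.2.2.2.2 {v} i j k hij hjk
    ⟨X, hX, Multiset.singleton_le.mpr hvX⟩ ⟨Y, hY, Multiset.singleton_le.mpr hvY⟩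
  exact ⟨Z, hZ, Multiset.singleton_le.mp hvZ⟩

lemma layer_elem {n d : ℕ} {a b : ℤ} {L : ℤ → Set (Multiset (Fin n))}
    (h : IsCLM n (d+1) a b L) {i : ℤ} (hi : a ≤ i) (hib : i ≤ b) :
    ∃ v : Fin n, App n L v i := by
  obtain ⟨X, hX⟩ := (h.2.2.1 i).mpr ⟨hi, hib⟩
  have hc : Multiset.card X = d + 1 := h.2.1 i X hX
  have : X ≠ 0 := by
    intro h0; rw [h0] at hc; simp at hc
  obtain ⟨v, hv⟩ := Multiset.exists_mem_of_ne_zero this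
  exact ⟨v, X, hX, hv⟩

/-- Base case: a connected layer multicomplex of rank 1 with supports in `A`
has length at most `|A| - 1`. -/
lemma weak_base {n : ℕ} (A : Finset (Fin n)) {a b : ℤ} {L : ℤ → Set (Multiset (Fin n))}
    (h : IsCLM n 1 a b L) (hS : ∀ i X, X ∈ L i → ∀ v ∈ X, v ∈ A) :
    (b : ℤ) ≤ a + ((A.card : ℤ) - 1) := by
  obtain ⟨hab, hcard, hne, hdisj, _⟩ := h
  -- for each layer pick the unique element
  have hch : ∀ i : ℤ, a ≤ i → i ≤ b → ∃ v : Fin n, ({v} : Multiset (Fin n)) ∈ L i := by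
    intro i hi hib
    obtain ⟨X, hX⟩ := (hne i).mpr ⟨hi, hib⟩
    obtain ⟨v, hv⟩ := Multiset.card_eq_one.mp (hcard i X hX)
    exact ⟨v, hv ▸ hX⟩
  set f : ℤ → Fin n := fun i => if h : a ≤ i ∧ i ≤ b then (hch i h.1 h.2).choose
    else (hch a le_rfl hab).choose with hf
  have hmem : ∀ i ∈ Finset.Icc a b, f i ∈ A := by
    intro i hi
    rw [Finset.mem_Icc] at hi
    have := (hch i hi.1 hi.2).choose_spec
    have : f i ∈ ({(hch i hi.1 hi.2).choose} : Multiset (Fin n)) := by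
      simp [hf, hi]
    exact hS i _ (hch i hi.1 hi.2).choose_spec _ this
  have hinj : Set.InjOn f (Finset.Icc a b) := by
    intro i hi j hj hfij
    rw [Finset.coe_Icc, Set.mem_Icc] at hi hj
    have h1 := (hch i hi.1 hi.2).choose_spec
    have h2 := (hch j hj.1 hj.2).choose_spec
    have e1 : f i = (hch i hi.1 hi.2).choose := by simp [hf, hi.1, hi.2]
    have e2 : f j = (hch j hj.1 hj.2).choose := by simp [hf, hj.1, hj.2]
    rw [e1, e2] at hfij
    rw [hfij] at h1
    exact hdisj i j _ h1 h2
  have hcardle : (Finset.Icc a b).card ≤ A.card :=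
    Finset.card_le_card_of_injOn f hmem hinj
  rw [Int.card_Icc] at hcardle
  have : b + 1 - a ≤ (A.card : ℤ) := by
    have := Int.toNat_le.mp (le_of_eq (rfl : (b+1-a).toNat = (b+1-a).toNat))
    omega
  omega

/-- Inductive step (Larman's argument with a strengthened hypothesis):
if the weak bound holds at rank `d+1`, then for a CLM of rank `d+2` with
support `A` and `T` the set of elements appearing in the first layer,
the length is at most `2^d * (2|A| - |T| - 1)`. -/
lemma strong (d : ℕ)
    (W : ∀ (n : ℕ) (A : Finset (Fin n)) (a b : ℤ) (L : ℤ → Set (Multiset (Fin n))),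
      IsCLM n (d+1) a b L → (∀ i X, X ∈ L i → ∀ v ∈ X, v ∈ A) →
      (b : ℤ) ≤ a + ((A.card : ℤ) - 1) * 2 ^ d) :
    ∀ (m n : ℕ) (A : Finset (Fin n)) (a b : ℤ) (L : ℤ → Set (Multiset (Fin n))),
      IsCLM n (d+2) a b L → (∀ i X, X ∈ L i → ∀ v ∈ X, v ∈ A) →
      b - a ≤ (m : ℤ) →
      (b : ℤ) ≤ a + 2 ^ d *
        (2 * (A.card : ℤ) - ((A.filter (fun u => App n L u a)).card : ℤ) - 1) := by
  intro m
  induction m with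
  | zero =>
    intro n A a b L h hS hm
    have hab := h.1
    have hba : b = a := le_antisymm (by omega) hab
    subst hba
    -- goal : 0 ≤ 2^d * (2|A| - |T| - 1); T nonempty subset of A
    obtain ⟨v, X, hX, hvX⟩ := layer_elem (d := d+1) h le_rfl hab
    have hvA : v ∈ A := hS _ _ hX _ hvX
    have hvT : v ∈ A.filter (fun u => App n L u b) := by
      simp only [Finset.mem_filter]
      exact ⟨hvA, X, hX, hvX⟩
    have h1 : 1 ≤ (A.filter (fun u => App n L u b)).card := Finset.card_pos.mpr ⟨v, hvT⟩
    have h2 : (A.filter (fun u => App n L u b)).card ≤ A.card :=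
      Finset.card_le_card (Finset.filter_subset _ _)
    have h3 : (1:ℤ) ≤ 2 ^ d := one_le_pow₀ (by norm_num)
    nlinarith [h3]
  | succ m ih =>
    intro n A a b L h hS hm
    obtain ⟨hab, hcard, hne, hdisj, hconn⟩ := h
    have h' : IsCLM n (d+2) a b L := ⟨hab, hcard, hne, hdisj, hconn⟩
    -- the first layer has some element
    obtain ⟨v0, hv0⟩ := layer_elem (d := d+1) h' le_rfl hab
    -- c1 : the farthest layer reachable by the star of an element of the first layer
    set F : Finset ℤ := (Finset.Icc a b).filter
      (fun j => ∃ v : Fin n, App n L v a ∧ App n L v j) with hF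
    have haF : a ∈ F := by
      rw [hF, Finset.mem_filter, Finset.mem_Icc]
      exact ⟨⟨le_rfl, hab⟩, v0, hv0, hv0⟩
    set c1 : ℤ := F.max' ⟨a, haF⟩ with hc1
    have hc1F : c1 ∈ F := F.max'_mem _
    have hac1 : a ≤ c1 ∧ c1 ≤ b := by
      have := (Finset.mem_filter.mp hc1F).1
      rw [Finset.mem_Icc] at this
      exact this
    obtain ⟨-, v1, hv1a, hv1c⟩ := Finset.mem_filter.mp hc1F
    have hmaxF : ∀ j ∈ F, j ≤ c1 := fun j hj => F.le_max' j hj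
    -- no element of the first layer appears after c1
    have hkey : ∀ u j, App n L u a → App n L u j → j ≤ c1 := by
      intro u j hua huj
      apply hmaxF
      rw [hF, Finset.mem_filter, Finset.mem_Icc]
      exact ⟨⟨(app_bounds h' huj).1, (app_bounds h' huj).2⟩, u, hua, huj⟩
    -- v1's star covers [a, c1]
    have hv1cov : ∀ j, a ≤ j → j ≤ c1 → App n L v1 j := by
      intro j hj hjc
      exact app_interval h' hj hjc hv1a hv1c
    -- the link of v1 over [a, c1]
    set L1 : ℤ → Set (Multiset (Fin n)) :=
      fun j => {Y | a ≤ j ∧ j ≤ c1 ∧ (v1 ::ₘ Y) ∈ L j} with hL1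
    set A1 : Finset (Fin n) := A.filter (fun u => ∃ j, a ≤ j ∧ j ≤ c1 ∧ App n L u j)
      with hA1
    have hclm1 : IsCLM n (d+1) a c1 L1 := by
      refine ⟨hac1.1, ?_, ?_, ?_, ?_⟩
      · intro i Y hY
        have := hcard i _ hY.2.2
        rw [Multiset.card_cons] at this
        omega
      · intro i
        constructor
        · rintro ⟨Y, h1, h2, -⟩
          exact ⟨h1, h2⟩
        · rintro ⟨h1, h2⟩
          obtain ⟨X, hX, hvX⟩ := hv1cov i h1 h2
          exact ⟨X.erase v1, h1, h2, by rwa [Multiset.cons_erase hvX]⟩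
      · intro i j Y hY hY'
        exact hdisj i j _ hY.2.2 hY'.2.2
      · intro S i j k hij hjk ⟨Y, hY, hSY⟩ ⟨Z, hZ, hSZ⟩
        obtain ⟨X, hX, hX2⟩ := hconn (v1 ::ₘ S) i j k hij hjk
          ⟨v1 ::ₘ Y, hY.2.2, Multiset.cons_le_cons v1 hSY⟩
          ⟨v1 ::ₘ Z, hZ.2.2, Multiset.cons_le_cons v1 hSZ⟩
        have hv1X : v1 ∈ X := Multiset.mem_of_le hX2 (Multiset.mem_cons_self v1 S)
        refine ⟨X.erase v1, ⟨le_trans hY.1 hij, le_trans hjk hZ.2.1, ?_⟩, ?_⟩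
        · rwa [Multiset.cons_erase hv1X]
        · rw [← Multiset.cons_le_cons_iff v1, Multiset.cons_erase hv1X]
          exact hX2
    have hS1 : ∀ i X, X ∈ L1 i → ∀ v ∈ X, v ∈ A1 := by
      intro i Y hY u hu
      rw [hA1, Finset.mem_filter]
      have huL : u ∈ (v1 ::ₘ Y) := Multiset.mem_cons_of_mem hu
      exact ⟨hS i _ hY.2.2 u huL, i, hY.1, hY.2.1, v1 ::ₘ Y, hY.2.2, huL⟩
    have hW1 : (c1 : ℤ) ≤ a + ((A1.card : ℤ) - 1) * 2 ^ d := W n A1 a c1 L1 hclm1 hS1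
    have hA1sub : A1 ⊆ A := Finset.filter_subset _ _
    have h2d : (1:ℤ) ≤ 2 ^ d := one_le_pow₀ (by norm_num)
    set T : Finset (Fin n) := A.filter (fun u => App n L u a) with hT
    have hTsub : T ⊆ A := Finset.filter_subset _ _
    by_cases hcb : c1 = b
    · -- the star of v1 covers everything
      have hcards : (A1.card : ℤ) + (T.card : ℤ) ≤ 2 * A.card := by
        have := Finset.card_le_card hA1sub
        have := Finset.card_le_card hTsub
        omega
      rw [← hcb]
      nlinarith [hW1, h2d, hcards]
    · -- split off the tail [c1+1, b]
      have hc1b : c1 + 1 ≤ b := by omega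
      set L' : ℤ → Set (Multiset (Fin n)) :=
        fun j => {X | c1 + 1 ≤ j ∧ X ∈ L j} with hL'
      set A' : Finset (Fin n) := A.filter (fun u => ∃ j, c1 + 1 ≤ j ∧ j ≤ b ∧ App n L u j)
        with hA'
      have hclm' : IsCLM n (d+2) (c1+1) b L' := by
        refine ⟨hc1b, ?_, ?_, ?_, ?_⟩
        · intro i X hX; exact hcard i X hX.2
        · intro i
          constructor
          · rintro ⟨X, h1, h2⟩
            exact ⟨h1, ((hne i).mp ⟨X, h2⟩).2⟩
          · rintro ⟨h1, h2⟩
            obtain ⟨X, hX⟩ := (hne i).mpr ⟨by omega, h2⟩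
            exact ⟨X, h1, hX⟩
        · intro i j X hX hX'
          exact hdisj i j X hX.2 hX'.2
        · intro S i j k hij hjk ⟨X, hX, hSX⟩ ⟨Z, hZ, hSZ⟩
          obtain ⟨Y, hY, hSY⟩ := hconn S i j k hij hjk ⟨X, hX.2, hSX⟩ ⟨Z, hZ.2, hSZ⟩
          exact ⟨Y, ⟨le_trans hX.1 hij, hY⟩, hSY⟩
      have hS' : ∀ i X, X ∈ L' i → ∀ v ∈ X, v ∈ A' := by
        intro i X hX u hu
        rw [hA', Finset.mem_filter]
        have hib : i ≤ b := ((hne i).mp ⟨X, hX.2⟩).2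
        exact ⟨hS i X hX.2 u hu, i, hX.1, hib, X, hX.2, hu⟩
      have hm' : b - (c1 + 1) ≤ (m : ℤ) := by
        omega
      have hIH := ih n A' (c1+1) b L' hclm' hS' hm'
      -- identify the first-layer set of the tail with T'
      set T' : Finset (Fin n) := A.filter (fun u => App n L u (c1+1)) with hT'
      have hTeq : A'.filter (fun u => App n L' u (c1+1)) = T' := by
        ext u
        simp only [hT', hA', Finset.mem_filter]
        constructor
        · rintro ⟨⟨huA, -⟩, X, hX, huX⟩
          exact ⟨huA, X, hX.2, huX⟩
        · rintro ⟨huA, X, hX, huX⟩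
          exact ⟨⟨huA, c1+1, le_rfl, hc1b, X, hX, huX⟩, X, ⟨le_rfl, hX⟩, huX⟩
      rw [hTeq] at hIH
      -- cardinality accounting
      have hA'sub : A' ⊆ A := Finset.filter_subset _ _
      have hT'sub : T' ⊆ A := Finset.filter_subset _ _
      have hint : A1 ∩ A' ⊆ T' := by
        intro u hu
        rw [Finset.mem_inter, hA1, hA', Finset.mem_filter, Finset.mem_filter] at hu
        obtain ⟨⟨huA, i, hi1, hi2, hui⟩, -, k, hk1, hk2, huk⟩ := hu
        rw [hT', Finset.mem_filter]
        exact ⟨huA, app_interval h' (by omega) hk1 hui huk⟩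
      have hC2 : A1.card + A'.card ≤ A.card + T'.card := by
        have e1 : (A1 ∪ A').card + (A1 ∩ A').card = A1.card + A'.card :=
          Finset.card_union_add_card_inter A1 A'
        have e2 : (A1 ∪ A').card ≤ A.card :=
          Finset.card_le_card (Finset.union_subset hA1sub hA'sub)
        have e3 : (A1 ∩ A').card ≤ T'.card := Finset.card_le_card hint
        omega
      have hdisjTA' : Disjoint T A' := by
        rw [Finset.disjoint_left]
        intro u huT huA'
        rw [hT, Finset.mem_filter] at huT
        rw [hA', Finset.mem_filter] at huA'
        obtain ⟨-, k, hk1, hk2, huk⟩ := huA'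
        have := hkey u k huT.2 huk
        omega
      have hC3 : T.card + A'.card ≤ A.card := by
        have : (T ∪ A').card = T.card + A'.card := Finset.card_union_of_disjoint hdisjTA'
        have h2 : (T ∪ A').card ≤ A.card :=
          Finset.card_le_card (Finset.union_subset hTsub hA'sub)
        omega
      -- combine
      have hkey2 : (A1.card : ℤ) + 2 * A'.card - T'.card ≤ 2 * A.card - T.card := by
        push_cast at hC2 hC3
        omega
      nlinarith [hW1, hIH, h2d, hkey2]

/-- Weak bound: a CLM of rank `d+1` with supports in `A` has length at most
`(|A|-1) * 2^d`. -/
lemma weak : ∀ (d n : ℕ) (A : Finset (Fin n)) (a b : ℤ) (L : ℤ → Set (Multiset (Fin n))),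
    IsCLM n (d+1) a b L → (∀ i X, X ∈ L i → ∀ v ∈ X, v ∈ A) →
    (b : ℤ) ≤ a + ((A.card : ℤ) - 1) * 2 ^ d := by
  intro d
  induction d with
  | zero =>
    intro n A a b L h hS
    simpa using weak_base A h hS
  | succ d ihd =>
    intro n A a b L h hS
    have hst := strong d (fun n A a b L h hS => ihd n A a b L h hS)
      (b - a).toNat n A a b L h hS (Int.self_le_toNat _)
    -- |T| ≥ 1 and T ⊆ A
    obtain ⟨v, X, hX, hvX⟩ := layer_elem (d := d+1) h le_rfl h.1
    have hvT : v ∈ A.filter (fun u => App n L u a) := by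
      simp only [Finset.mem_filter]
      exact ⟨hS _ _ hX _ hvX, X, hX, hvX⟩
    have h1 : 1 ≤ (A.filter (fun u => App n L u a)).card := Finset.card_pos.mpr ⟨v, hvT⟩
    have h2d : (0:ℤ) ≤ 2 ^ d := by positivity
    have : ((A.filter (fun u => App n L u a)).card : ℤ) ≥ 1 := by exact_mod_cast h1
    have hmul : 2 ^ d * (2 * (A.card:ℤ) - ((A.filter (fun u => App n L u a)).card : ℤ) - 1)
        ≤ 2 ^ d * (2 * ((A.card:ℤ) - 1)) :=
      mul_le_mul_of_nonneg_left (by linarith) h2d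
    calc (b:ℤ) ≤ a + 2 ^ d * (2 * ((A.card:ℤ) - 1)) := by linarith
    _ = a + ((A.card:ℤ) - 1) * 2 ^ (d+1) := by ring

/-- Larman–Barnette-type bound: for all `n ≥ 1` and `d ≥ 1`,
`H_clm(n,d) ≤ (n−1)·2^{d−1}`. -/
theorem Hclm_barnette_larman (n d : ℕ) (hn : 1 ≤ n) (hd : 1 ≤ d) :
    Hclm n d ≤ (n - 1) * 2 ^ (d - 1) := by
  apply csSup_le'
  rintro l ⟨a, b, L, hclm, rfl⟩
  obtain ⟨d', rfl⟩ : ∃ d', d = d' + 1 := ⟨d - 1, by omega⟩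
  have hb := weak d' n Finset.univ a b L hclm (fun i X hX v hv => Finset.mem_univ v)
  rw [Finset.card_univ, Fintype.card_fin] at hb
  simp only [Nat.add_sub_cancel]
  rw [Int.toNat_le]
  have : ((n - 1) * 2 ^ d' : ℕ) = ((n:ℤ) - 1) * 2 ^ d' := by
    push_cast [Nat.cast_sub hn]
    ring
  rw [this]
  linarith [hb]
end

section
/- If n ≤ 3 or d ≤ 2, then H_clm(n,d) = (n−1)d exactly. -/
namespace CLMaux

/-- Interval-free version of `IsCLM`, stable under restriction of the layer range. -/
def CLM (n d : ℕ) (a b : ℤ) (L : ℤ → Set (Multiset (Fin n))) : Prop :=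
  (∀ i X, X ∈ L i → Multiset.card X = d) ∧
  (∀ i, a ≤ i → i ≤ b → (L i).Nonempty) ∧
  (∀ i j X, X ∈ L i → X ∈ L j → i = j) ∧
  (∀ (S : Multiset (Fin n)) (i j k : ℤ), i ≤ j → j ≤ k →
    (∃ X ∈ L i, S ≤ X) → (∃ X ∈ L k, S ≤ X) → ∃ X ∈ L j, S ≤ X)

variable {n d : ℕ} {a b : ℤ} {L : ℤ → Set (Multiset (Fin n))}

lemma isCLM_clm (h : IsCLM n d a b L) : a ≤ b ∧ CLM n d a b L :=
  ⟨h.1, h.2.1, fun i h1 h2 => (h.2.2.1 i).mpr ⟨h1, h2⟩, h.2.2.2.1, h.2.2.2.2⟩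

lemma clm_mono {a' b' : ℤ} (h : CLM n d a b L) (ha : a ≤ a') (hb : b' ≤ b) :
    CLM n d a' b' L :=
  ⟨h.1, fun i h1 h2 => h.2.1 i (ha.trans h1) (h2.trans hb), h.2.2.1, h.2.2.2⟩

/-- `v` appears in some facet of layer `i`. -/
def Act (L : ℤ → Set (Multiset (Fin n))) (v : Fin n) (i : ℤ) : Prop :=
  ∃ X ∈ L i, v ∈ X

lemma act_convex (h : CLM n d a b L) {v : Fin n} {i j k : ℤ}
    (h1 : Act L v i) (h2 : Act L v k) (hij : i ≤ j) (hjk : j ≤ k) : Act L v j := by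
  obtain ⟨X, hX, hv⟩ := h.2.2.2 {v} i j k hij hjk
    (by obtain ⟨X, hX, hv⟩ := h1; exact ⟨X, hX, Multiset.singleton_le.mpr hv⟩)
    (by obtain ⟨X, hX, hv⟩ := h2; exact ⟨X, hX, Multiset.singleton_le.mpr hv⟩)
  exact ⟨X, hX, Multiset.singleton_le.mp hv⟩

lemma eq_of_forall_eq (h : CLM n d a b L) (hab : a ≤ b) (W : Multiset (Fin n))
    (huni : ∀ i X, a ≤ i → i ≤ b → X ∈ L i → X = W) : a = b := by
  obtain ⟨Xa, hXa⟩ := h.2.1 a le_rfl hab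
  obtain ⟨Xb, hXb⟩ := h.2.1 b hab le_rfl
  have hXab : Xa = Xb := (huni a Xa le_rfl hab hXa).trans (huni b Xb hab le_rfl hXb).symm
  exact h.2.2.1 a b Xa hXa (hXab ▸ hXb)

/-- The link of a symbol. -/
def linkL (L : ℤ → Set (Multiset (Fin n))) (s : Fin n) : ℤ → Set (Multiset (Fin n)) :=
  fun i => {X | s ::ₘ X ∈ L i}

lemma clm_link {a' b' : ℤ} {s : Fin n} (h : CLM n (d+1) a b L)
    (hact : ∀ i, a' ≤ i → i ≤ b' → Act L s i) :
    CLM n d a' b' (linkL L s) := by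
  refine ⟨?_, ?_, ?_, ?_⟩
  · intro i X hX
    have := h.1 i _ hX
    simpa using this
  · intro i h1 h2
    obtain ⟨X, hX, hs⟩ := hact i h1 h2
    exact ⟨X.erase s, by simpa [linkL, Multiset.cons_erase hs] using hX⟩
  · intro i j X hX hY
    exact h.2.2.1 i j _ hX hY
  · intro S i j k hij hjk ⟨X, hX, hSX⟩ ⟨Y, hY, hSY⟩
    obtain ⟨Z, hZ, hSZ⟩ := h.2.2.2 (s ::ₘ S) i j k hij hjk
      ⟨s ::ₘ X, hX, Multiset.cons_le_cons s hSX⟩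
      ⟨s ::ₘ Y, hY, Multiset.cons_le_cons s hSY⟩
    have hsZ : s ∈ Z := Multiset.mem_of_le hSZ (Multiset.mem_cons_self s S)
    refine ⟨Z.erase s, by simpa [linkL, Multiset.cons_erase hsZ] using hZ, ?_⟩
    have := Multiset.erase_le_erase s hSZ
    simpa using this

lemma facet_elt (h : CLM n (d+1) a b L) {i : ℤ} (h1 : a ≤ i) (h2 : i ≤ b) :
    ∃ X ∈ L i, ∃ x, x ∈ X := by
  obtain ⟨X, hX⟩ := h.2.1 i h1 h2
  refine ⟨X, hX, ?_⟩
  have hc := h.1 i X hX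
  exact Multiset.exists_mem_of_ne_zero (by
    intro h0; rw [h0] at hc; simp at hc)

/-! ### The upper bound for `n = 3` -/

lemma n3_bound : ∀ (d : ℕ) (a b : ℤ) (L : ℤ → Set (Multiset (Fin 3))),
    CLM 3 d a b L → a ≤ b → b ≤ a + 2 * d := by
  intro d
  induction d with
  | zero =>
    intro a b L h hab
    have := eq_of_forall_eq h hab 0 (fun i X _ _ hX => by
      have := h.1 i X hX; exact Multiset.card_eq_zero.mp this)
    omega
  | succ d IH =>
    intro a b L h hab
    -- maximal prefix with at most one symbol
    set P : ℤ → Prop := fun j => ∃ s : Fin 3,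
      ∀ i X x, a ≤ i → i ≤ j → X ∈ L i → x ∈ X → x = s with hP
    obtain ⟨q, ⟨hq1, hq2, hq3⟩, hqmax⟩ :=
      Int.exists_greatest_of_bdd (P := fun j => a - 1 ≤ j ∧ j ≤ b ∧ P j)
        ⟨b, fun z hz => hz.2.1⟩
        ⟨a - 1, by omega, by omega, ⟨0, fun i X x h1 h2 _ _ => by omega⟩⟩
    by_cases hqb : q = b
    · -- the whole multicomplex uses one symbol
      obtain ⟨s₀, hs₀⟩ := hq3
      have := eq_of_forall_eq h hab (Multiset.replicate (d+1) s₀) (fun i X h1 h2 hX =>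
        Multiset.eq_replicate.mpr ⟨h.1 i X hX, fun x hx => hs₀ i X x h1 (hqb ▸ h2) hX hx⟩)
      omega
    · have hqlt : q < b := lt_of_le_of_ne hq2 hqb
      have hq_le_a : q ≤ a := by
        by_contra h'
        have haq : a ≤ q := by omega
        obtain ⟨s₀, hs₀⟩ := hq3
        have : a = q := eq_of_forall_eq (clm_mono h le_rfl hq2) haq
          (Multiset.replicate (d+1) s₀) (fun i X h1 h2 hX =>
            Multiset.eq_replicate.mpr ⟨h.1 i X hX, fun x hx => hs₀ i X x h1 h2 hX hx⟩)
        omega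
      -- a symbol active at layer q+1
      obtain ⟨X₁, hX₁, x₁, hx₁⟩ := facet_elt h (by omega) (by omega : q + 1 ≤ b)
      -- greatest layer sharing a symbol with layer q+1
      obtain ⟨R, ⟨hR1, hR2, s', hs'1, hs'2⟩, hRmax⟩ :=
        Int.exists_greatest_of_bdd
          (P := fun j => a ≤ j ∧ j ≤ b ∧ ∃ s : Fin 3, Act L s (q+1) ∧ Act L s j)
          ⟨b, fun z hz => hz.2.1⟩
          ⟨q + 1, by omega, by omega, x₁, ⟨X₁, hX₁, hx₁⟩, ⟨X₁, hX₁, hx₁⟩⟩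
      have hq1R : q + 1 ≤ R := hRmax (q+1) ⟨by omega, by omega, x₁, ⟨X₁, hX₁, hx₁⟩, ⟨X₁, hX₁, hx₁⟩⟩
      -- the link bound on [q+1, R]
      have hlink : CLM 3 d (q+1) R (linkL L s') :=
        clm_link h (fun i h1 h2 => act_convex h hs'1 hs'2 h1 h2)
      have hRbound : R ≤ (q + 1) + 2 * d := IH (q+1) R (linkL L s') hlink hq1R
      by_cases hRb : R = b
      · omega
      · have hRlt : R < b := lt_of_le_of_ne hR2 hRb
        -- two distinct symbols active within [a, q+1]
        have hP1 : ¬ P (q+1) := fun hp => by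
          have := hqmax (q+1) ⟨by omega, by omega, hp⟩; omega
        have hP1' : ∃ i X x, a ≤ i ∧ i ≤ q+1 ∧ X ∈ L i ∧ x ∈ X ∧ x ≠ x₁ := by
          by_contra hc
          push_neg at hc
          exact hP1 ⟨x₁, fun i X x h1 h2 hX hx => hc i X x h1 h2 hX hx⟩
        obtain ⟨i₀, X₀, y, hi₀1, hi₀2, hX₀, hy, hyx₁⟩ := hP1'
        -- no symbol active in [R+1,b] can be active in [a,q+1]
        have hkill : ∀ (w : Fin 3) (j : ℤ), R + 1 ≤ j → j ≤ b → Act L w j →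
            w ≠ x₁ ∧ w ≠ y := by
          intro w j hj1 hj2 hw
          constructor
          · rintro rfl
            have := hRmax j ⟨by omega, hj2, w, ⟨X₁, hX₁, hx₁⟩, hw⟩
            omega
          · rintro rfl
            have hwq1 : Act L w (q+1) :=
              act_convex h ⟨X₀, hX₀, hy⟩ hw (by omega) (by omega)
            have := hRmax j ⟨by omega, hj2, w, hwq1, hw⟩
            omega
        -- the symbol active at layer b
        obtain ⟨Xb, hXb, t, ht⟩ := facet_elt h (by omega : a ≤ b) le_rfl
        have htact : Act L t b := ⟨Xb, hXb, ht⟩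
        have htk := hkill t b (by omega) le_rfl htact
        -- uniformity on [R+1, b]
        have huni : ∀ i X, R + 1 ≤ i → i ≤ b → X ∈ L i → X = Multiset.replicate (d+1) t := by
          intro i X h1 h2 hX
          refine Multiset.eq_replicate.mpr ⟨h.1 i X hX, fun x hx => ?_⟩
          have hxk := hkill x i h1 h2 ⟨X, hX, hx⟩
          by_contra hxt
          have h1' : x.val ≠ t.val := fun hh => hxt (Fin.ext hh)
          have h2' : x.val ≠ x₁.val := fun hh => hxk.1 (Fin.ext hh)
          have h3' : x.val ≠ y.val := fun hh => hxk.2 (Fin.ext hh)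
          have h4' : t.val ≠ x₁.val := fun hh => htk.1 (Fin.ext hh)
          have h5' : t.val ≠ y.val := fun hh => htk.2 (Fin.ext hh)
          have h6' : y.val ≠ x₁.val := fun hh => hyx₁ (Fin.ext hh)
          have := x.isLt; have := t.isLt; have := x₁.isLt; have := y.isLt
          omega
        have : R + 1 = b :=
          eq_of_forall_eq (clm_mono h (by omega) le_rfl) (by omega)
            (Multiset.replicate (d+1) t) huni
        omega

/-! ### The upper bound for `d = 2` -/

/-- symbols active at layer `i` -/
noncomputable def Vf (L : ℤ → Set (Multiset (Fin n))) (i : ℤ) : Finset (Fin n) :=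
  @Finset.filter _ (fun v => Act L v i) (Classical.decPred _) Finset.univ

/-- symbols active somewhere in `[a,b]` -/
noncomputable def Of (L : ℤ → Set (Multiset (Fin n))) (a b : ℤ) : Finset (Fin n) :=
  @Finset.filter _ (fun v => ∃ i, a ≤ i ∧ i ≤ b ∧ Act L v i) (Classical.decPred _) Finset.univ

lemma mem_Vf {v : Fin n} {i : ℤ} : v ∈ Vf L i ↔ Act L v i := by
  simp [Vf]

lemma mem_Of {v : Fin n} : v ∈ Of L a b ↔ ∃ i, a ≤ i ∧ i ≤ b ∧ Act L v i := by
  simp [Of]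

lemma d2_bound : ∀ (N : ℕ) (a b : ℤ) (L : ℤ → Set (Multiset (Fin n))),
    CLM n 2 a b L → a ≤ b → (b - a).toNat ≤ N →
    b + 1 + ((Vf L a).card : ℤ) ≤ a + 2 * ((Of L a b).card : ℤ) := by
  intro N
  induction N with
  | zero =>
    intro a b L h hab hN
    have hba : b = a := by omega
    subst hba
    obtain ⟨X, hX⟩ := h.2.1 b le_rfl le_rfl
    have hc := h.1 b X hX
    obtain ⟨x, hx⟩ : ∃ x, x ∈ X := Multiset.exists_mem_of_ne_zero (by
      intro h0; rw [h0] at hc; simp at hc)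
    have hVsub : Vf L b ⊆ Of L b b := by
      intro v hv; rw [mem_Vf] at hv; rw [mem_Of]; exact ⟨b, le_rfl, le_rfl, hv⟩
    have h1 : 1 ≤ (Vf L b).card := Finset.card_pos.mpr ⟨x, mem_Vf.mpr ⟨X, hX, hx⟩⟩
    have h2 : (Vf L b).card ≤ (Of L b b).card := Finset.card_le_card hVsub
    omega
  | succ N IH =>
    intro a b L h hab hN
    classical
    obtain ⟨X₀, hX₀⟩ := h.2.1 a le_rfl hab
    have hc₀ := h.1 a X₀ hX₀
    obtain ⟨x₀, hx₀⟩ : ∃ x, x ∈ X₀ := Multiset.exists_mem_of_ne_zero (by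
      intro h0; rw [h0] at hc₀; simp at hc₀)
    -- greatest layer sharing a symbol with layer a
    obtain ⟨r, ⟨hr1, hr2, u₀, hu1, hu2⟩, hrmax⟩ :=
      Int.exists_greatest_of_bdd
        (P := fun j => a ≤ j ∧ j ≤ b ∧ ∃ v : Fin n, Act L v a ∧ Act L v j)
        ⟨b, fun z hz => hz.2.1⟩
        ⟨a, le_rfl, hab, x₀, ⟨X₀, hX₀, hx₀⟩, ⟨X₀, hX₀, hx₀⟩⟩
    -- partner injection on [a, r]
    have hwit : ∀ i, a ≤ i → i ≤ r → ∃ X, X ∈ L i ∧ u₀ ∈ X := by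
      intro i h1 h2
      obtain ⟨X, hX, hu⟩ := act_convex h hu1 hu2 h1 h2
      exact ⟨X, hX, hu⟩
    set f : ℤ → Multiset (Fin n) := fun i =>
      if hh : ∃ X, X ∈ L i ∧ u₀ ∈ X then (Classical.choose hh).erase u₀ else 0 with hf
    have hinj : Set.InjOn f (Finset.Icc a r) := by
      intro i₁ m₁ i₂ m₂ hfeq
      simp only [Finset.coe_Icc, Set.mem_Icc] at m₁ m₂
      have h₁ := hwit i₁ m₁.1 m₁.2
      have h₂ := hwit i₂ m₂.1 m₂.2
      rw [hf] at hfeq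
      simp only [dif_pos h₁, dif_pos h₂] at hfeq
      have s₁ := Classical.choose_spec h₁
      have s₂ := Classical.choose_spec h₂
      have : Classical.choose h₁ = Classical.choose h₂ := by
        rw [← Multiset.cons_erase s₁.2, ← Multiset.cons_erase s₂.2, hfeq]
      exact h.2.2.1 i₁ i₂ _ s₁.1 (this ▸ s₂.1)
    -- the partner of layer i is an active symbol at i
    have hpartner : ∀ i, a ≤ i → i ≤ r → ∃ w : Fin n, f i = {w} ∧ Act L w i := by
      intro i h1 h2
      have hh := hwit i h1 h2
      have s := Classical.choose_spec hh
      have hcard : Multiset.card ((Classical.choose hh).erase u₀) = 1 := by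
        have := h.1 i _ s.1
        rw [Multiset.card_erase_of_mem s.2, this]
        rfl
      obtain ⟨w, hw⟩ := Multiset.card_eq_one.mp hcard
      refine ⟨w, by rw [hf]; simp only [dif_pos hh]; exact hw, ?_⟩
      have hwX : w ∈ Classical.choose hh :=
        Multiset.mem_of_mem_erase (by rw [hw]; exact Multiset.mem_singleton_self w)
      exact ⟨Classical.choose hh, s.1, hwX⟩
    have hIccCard : ((Finset.Icc a r).card : ℤ) = r + 1 - a := by
      rw [Int.card_Icc]; omega
    by_cases hrb : r = b
    · -- the whole range lies within the star of u₀
      subst hrb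
      have hmaps : ∀ i ∈ Finset.Icc a r, f i ∈
          (Of L a r).image (fun v => ({v} : Multiset (Fin n))) := by
        intro i hi
        rw [Finset.mem_Icc] at hi
        obtain ⟨w, hfw, hact⟩ := hpartner i hi.1 hi.2
        exact Finset.mem_image.mpr ⟨w, mem_Of.mpr ⟨i, hi.1, hi.2, hact⟩, hfw.symm⟩
      have hcard1 : (Finset.Icc a r).card ≤ (Of L a r).card := by
        calc (Finset.Icc a r).card
            ≤ ((Of L a r).image (fun v => ({v} : Multiset (Fin n)))).card :=
              Finset.card_le_card_of_injOn f hmaps hinj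
          _ ≤ (Of L a r).card := Finset.card_image_le
      have hAsub : Vf L a ⊆ Of L a r := by
        intro v hv; rw [mem_Vf] at hv; exact mem_Of.mpr ⟨a, le_rfl, hr1, hv⟩
      have := Finset.card_le_card hAsub
      omega
    · have hrlt : r < b := lt_of_le_of_ne hr2 hrb
      set A := Vf L a with hA
      set B' := Vf L (r+1) with hB
      set Ω := Of L a b with hΩ
      set Ω' := Of L (r+1) b with hΩ'
      set II := Ω \ (A ∪ Ω') with hII
      -- partner classification
      have hmaps : ∀ i ∈ Finset.Icc a r, f i ∈
          (A ∪ II ∪ B').image (fun v => ({v} : Multiset (Fin n))) := by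
        intro i hi
        rw [Finset.mem_Icc] at hi
        obtain ⟨w, hfw, hact⟩ := hpartner i hi.1 hi.2
        refine Finset.mem_image.mpr ⟨w, ?_, hfw.symm⟩
        by_cases hwA : w ∈ A
        · exact Finset.mem_union_left _ (Finset.mem_union_left _ hwA)
        · by_cases hwO : w ∈ Ω'
          · refine Finset.mem_union_right _ ?_
            rw [hB, mem_Vf]
            rw [hΩ', mem_Of] at hwO
            obtain ⟨i', hi'1, hi'2, hact'⟩ := hwO
            exact act_convex h hact hact' (by omega) (by omega)
          · refine Finset.mem_union_left _ (Finset.mem_union_right _ ?_)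
            rw [hII, Finset.mem_sdiff]
            refine ⟨mem_Of.mpr ⟨i, hi.1, by omega, hact⟩, ?_⟩
            rw [Finset.mem_union]
            rintro (hx | hx)
            · exact hwA hx
            · exact hwO hx
      have hcard1 : (Finset.Icc a r).card ≤ A.card + II.card + B'.card := by
        calc (Finset.Icc a r).card
            ≤ ((A ∪ II ∪ B').image (fun v => ({v} : Multiset (Fin n)))).card :=
              Finset.card_le_card_of_injOn f hmaps hinj
          _ ≤ (A ∪ II ∪ B').card := Finset.card_image_le
          _ ≤ (A ∪ II).card + B'.card := Finset.card_union_le _ _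
          _ ≤ A.card + II.card + B'.card := by
              have := Finset.card_union_le A II; omega
      -- induction hypothesis on [r+1, b]
      have hIH : b + 1 + (B'.card : ℤ) ≤ (r+1) + 2 * (Ω'.card : ℤ) :=
        IH (r+1) b L (clm_mono h (by omega) le_rfl) (by omega) (by omega)
      -- disjointness and subset facts
      have hdisj : Disjoint A Ω' := by
        rw [Finset.disjoint_left]
        intro v hvA hvO
        rw [hA, mem_Vf] at hvA
        rw [hΩ', mem_Of] at hvO
        obtain ⟨i', hi'1, hi'2, hact'⟩ := hvO
        have := hrmax i' ⟨by omega, hi'2, v, hvA, hact'⟩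
        omega
      have hsub : A ∪ Ω' ⊆ Ω := by
        intro v hv
        rw [Finset.mem_union] at hv
        rcases hv with hv | hv
        · rw [hA, mem_Vf] at hv; exact mem_Of.mpr ⟨a, le_rfl, hab, hv⟩
        · rw [hΩ', mem_Of] at hv
          obtain ⟨i', hi'1, hi'2, hact'⟩ := hv
          exact mem_Of.mpr ⟨i', by omega, hi'2, hact'⟩
      have e1 : II.card + (A ∪ Ω').card = Ω.card :=
        Finset.card_sdiff_add_card_eq_card hsub
      have e2 : (A ∪ Ω').card = A.card + Ω'.card :=
        Finset.card_union_of_disjoint hdisj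
      omega

/-! ### Counting bounds (`d = 1` and `n = 2`) -/

lemma layer_facet_inj (h : CLM n d a b L) (hab : a ≤ b) (T : Finset (Multiset (Fin n)))
    (hT : ∀ i X, a ≤ i → i ≤ b → X ∈ L i → X ∈ T) : b + 1 ≤ a + T.card := by
  classical
  set f : ℤ → Multiset (Fin n) := fun i =>
    if hh : (L i).Nonempty then Classical.choose hh else 0 with hf
  have hinj : Set.InjOn f (Finset.Icc a b) := by
    intro i₁ m₁ i₂ m₂ hfeq
    simp only [Finset.coe_Icc, Set.mem_Icc] at m₁ m₂
    have h₁ : (L i₁).Nonempty := h.2.1 i₁ m₁.1 m₁.2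
    have h₂ : (L i₂).Nonempty := h.2.1 i₂ m₂.1 m₂.2
    rw [hf] at hfeq
    simp only [dif_pos h₁, dif_pos h₂] at hfeq
    exact h.2.2.1 i₁ i₂ _ (Classical.choose_spec h₁) (hfeq ▸ Classical.choose_spec h₂)
  have hmaps : ∀ i ∈ Finset.Icc a b, f i ∈ T := by
    intro i hi
    rw [Finset.mem_Icc] at hi
    have h₁ : (L i).Nonempty := h.2.1 i hi.1 hi.2
    rw [hf]; simp only [dif_pos h₁]
    exact hT i _ hi.1 hi.2 (Classical.choose_spec h₁)
  have := Finset.card_le_card_of_injOn f hmaps hinj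
  have hIccCard : ((Finset.Icc a b).card : ℤ) = b + 1 - a := by
    rw [Int.card_Icc]; omega
  omega

lemma d1_bound (h : CLM n 1 a b L) (hab : a ≤ b) : b + 1 ≤ a + n := by
  classical
  have := layer_facet_inj h hab
    ((Finset.univ : Finset (Fin n)).image (fun v => ({v} : Multiset (Fin n))))
    (fun i X h1 h2 hX => by
      obtain ⟨w, hw⟩ := Multiset.card_eq_one.mp (h.1 i X hX)
      exact Finset.mem_image.mpr ⟨w, Finset.mem_univ w, hw.symm⟩)
  have hcard := Finset.card_image_le (s := (Finset.univ : Finset (Fin n)))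
    (f := fun v => ({v} : Multiset (Fin n)))
  simp only [Finset.card_univ, Fintype.card_fin] at hcard
  omega

lemma count_zero_add_count_one (X : Multiset (Fin 2)) :
    X.count 0 + X.count 1 = Multiset.card X := by
  induction X using Multiset.induction_on with
  | empty => simp
  | cons x s ih =>
    have hx : x = 0 ∨ x = 1 := by
      have hlt := x.isLt
      rcases (by omega : x.val = 0 ∨ x.val = 1) with h | h
      · exact Or.inl (Fin.ext h)
      · exact Or.inr (Fin.ext h)
    rcases hx with rfl | rfl <;>
      simp [Multiset.count_cons, ih] <;> omega

lemma fin2_eq {X Y : Multiset (Fin 2)} (hX : Multiset.card X = d)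
    (hY : Multiset.card Y = d) (hc : X.count 1 = Y.count 1) : X = Y := by
  have h1 := count_zero_add_count_one X
  have h2 := count_zero_add_count_one Y
  ext v
  have hv : v = 0 ∨ v = 1 := by
    have hlt := v.isLt
    rcases (by omega : v.val = 0 ∨ v.val = 1) with h | h
    · exact Or.inl (Fin.ext h)
    · exact Or.inr (Fin.ext h)
  rcases hv with rfl | rfl
  · omega
  · exact hc

lemma n2_bound {L : ℤ → Set (Multiset (Fin 2))} (h : CLM 2 d a b L) (hab : a ≤ b) :
    b + 1 ≤ a + d + 1 := by
  classical
  have := layer_facet_inj h hab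
    ((Finset.range (d+1)).image
      (fun c => (Multiset.replicate c 1 + Multiset.replicate (d - c) 0 : Multiset (Fin 2))))
    (fun i X h1 h2 hX => by
      refine Finset.mem_image.mpr ⟨X.count 1, ?_, ?_⟩
      · rw [Finset.mem_range]
        have := Multiset.count_le_card (1 : Fin 2) X
        rw [h.1 i X hX] at this
        omega
      · refine fin2_eq (d := d) ?_ (h.1 i X hX) ?_
        · have hle : X.count 1 ≤ d := by
            have := Multiset.count_le_card (1 : Fin 2) X
            rw [h.1 i X hX] at this; exact this
          simp [Multiset.card_replicate]
          omega
        · have h01 : (0 : Fin 2) ≠ 1 := by decide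
          simp [Multiset.count_replicate])
  have hcard := Finset.card_image_le (s := Finset.range (d+1))
    (f := fun c => (Multiset.replicate c 1 + Multiset.replicate (d - c) 0 : Multiset (Fin 2)))
  simp only [Finset.card_range] at hcard
  omega

/-! ### The lower bound construction -/

/-- sum of the values of a multiset over `Fin n`. -/
def vsum {n : ℕ} (X : Multiset (Fin n)) : ℕ := (X.map Fin.val).sum

lemma vsum_zero {n : ℕ} : vsum (0 : Multiset (Fin n)) = 0 := rfl

lemma vsum_cons {n : ℕ} (x : Fin n) (X : Multiset (Fin n)) :
    vsum (x ::ₘ X) = x.val + vsum X := by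
  simp [vsum]

lemma vsum_add {n : ℕ} (X Y : Multiset (Fin n)) : vsum (X + Y) = vsum X + vsum Y := by
  simp [vsum]

lemma vsum_le {n : ℕ} (X : Multiset (Fin n)) : vsum X ≤ Multiset.card X * (n - 1) := by
  induction X using Multiset.induction_on with
  | empty => simp [vsum]
  | cons x s ih =>
    rw [vsum_cons]
    have h1 : x.val ≤ n - 1 := by have := x.isLt; omega
    have h2 : Multiset.card (x ::ₘ s) * (n-1) = Multiset.card s * (n-1) + (n-1) := by
      rw [Multiset.card_cons]; ring
    omega

lemma exists_vsum {n : ℕ} (hn : 0 < n) :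
    ∀ (t m : ℕ), m ≤ t * (n - 1) → ∃ X : Multiset (Fin n), Multiset.card X = t ∧ vsum X = m := by
  intro t
  induction t with
  | zero =>
    intro m hm
    have hm0 : m = 0 := by omega
    subst hm0
    exact ⟨0, by simp, rfl⟩
  | succ t ih =>
    intro m hm
    have hsm : (t+1) * (n-1) = t * (n-1) + (n-1) := by ring
    set e : ℕ := min m (n - 1) with he
    obtain ⟨X, hX1, hX2⟩ := ih (m - e) (by omega)
    refine ⟨(⟨e, by omega⟩ : Fin n) ::ₘ X, by simp [hX1], ?_⟩
    rw [vsum_cons, hX2]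
    simp only []
    omega

/-- the sum layering of the complete multicomplex. -/
def sumL (n d : ℕ) : ℤ → Set (Multiset (Fin n)) :=
  fun i => {X | Multiset.card X = d ∧ (vsum X : ℤ) = i}

lemma sum_isCLM {n : ℕ} (hn : 0 < n) (d : ℕ) :
    IsCLM n d 0 ((n-1) * d : ℕ) (sumL n d) := by
  refine ⟨by positivity, ?_, ?_, ?_, ?_⟩
  · intro i X hX; exact hX.1
  · intro i
    constructor
    · rintro ⟨X, hX1, hX2⟩
      have := vsum_le X
      rw [hX1] at this
      constructor
      · rw [← hX2]; positivity
      · rw [← hX2]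
        have : vsum X ≤ (n-1) * d := by rw [mul_comm] at this; exact this
        exact_mod_cast this
    · rintro ⟨h1, h2⟩
      have hmc : (n-1) * d = d * (n-1) := Nat.mul_comm _ _
      obtain ⟨X, hX1, hX2⟩ := exists_vsum hn d i.toNat (by omega)
      exact ⟨X, hX1, by rw [hX2]; omega⟩
  · intro i j X hXi hXj
    rw [← hXi.2, ← hXj.2]
  · rintro S i j k hij hjk ⟨X, ⟨hXc, hXs⟩, hSX⟩ ⟨Y, ⟨hYc, hYs⟩, hSY⟩
    obtain ⟨D1, rfl⟩ := Multiset.le_iff_exists_add.mp hSX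
    obtain ⟨D2, rfl⟩ := Multiset.le_iff_exists_add.mp hSY
    rw [Multiset.card_add] at hXc hYc
    rw [vsum_add] at hXs hYs
    have hD2 := vsum_le D2
    have hcS : Multiset.card S ≤ d := by omega
    have hcD2 : Multiset.card D2 = d - Multiset.card S := by omega
    rw [hcD2] at hD2
    have hj1 : (vsum S : ℤ) ≤ j := by push_cast at hXs ⊢; omega
    have hj2 : j ≤ (vsum S : ℤ) + ((d - Multiset.card S) * (n-1) : ℕ) := by
      push_cast at hYs ⊢
      have : (vsum D2 : ℤ) ≤ ((d - Multiset.card S) * (n-1) : ℕ) := by exact_mod_cast hD2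
      push_cast at this
      omega
    obtain ⟨D, hD1, hD3⟩ := exists_vsum hn (d - Multiset.card S) (j - vsum S).toNat (by omega)
    refine ⟨S + D, ⟨?_, ?_⟩, Multiset.le_add_right S D⟩
    · rw [Multiset.card_add, hD1]; omega
    · rw [vsum_add, hD3]; push_cast; omega

/-- the trivial one-layer CLM for `d = 0` (works for every `n`, incl. `n = 0`). -/
lemma triv_isCLM (n : ℕ) : IsCLM n 0 0 0 (fun i => {X | X = 0 ∧ i = 0}) := by
  refine ⟨le_rfl, ?_, ?_, ?_, ?_⟩
  · rintro i X ⟨rfl, _⟩; rfl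
  · intro i
    constructor
    · rintro ⟨X, _, rfl⟩; exact ⟨le_rfl, le_rfl⟩
    · rintro ⟨h1, h2⟩; exact ⟨0, rfl, by omega⟩
  · rintro i j X ⟨_, rfl⟩ ⟨_, rfl⟩; rfl
  · rintro S i j k hij hjk ⟨X, ⟨rfl, rfl⟩, hSX⟩ ⟨Y, ⟨rfl, hk⟩, _⟩
    exact ⟨0, ⟨rfl, by omega⟩, hSX⟩

/-! ### The combined upper bound -/

lemma upper : ∀ (n d : ℕ), (n ≤ 3 ∨ d ≤ 2) → ∀ (a b : ℤ) (L : ℤ → Set (Multiset (Fin n))),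
    IsCLM n d a b L → (b - a).toNat ≤ (n - 1) * d := by
  intro n d h
  rcases h with hn | hd
  · -- n ≤ 3
    interval_cases n
    · -- n = 0
      intro a b L hclm
      obtain ⟨hab, hc⟩ := isCLM_clm hclm
      obtain ⟨X, hX⟩ := hc.2.1 a le_rfl hab
      rcases Nat.eq_zero_or_pos d with rfl | hd0
      · have : a = b := eq_of_forall_eq hc hab 0
          (fun i X _ _ hX => Multiset.card_eq_zero.mp (hc.1 i X hX))
        omega
      · have hcX := hc.1 a X hX
        obtain ⟨x, hx⟩ : ∃ x, x ∈ X := Multiset.exists_mem_of_ne_zero (by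
          intro h0; rw [h0] at hcX; simp at hcX; omega)
        exact (Nat.not_lt_zero _ x.isLt).elim
    · -- n = 1
      intro a b L hclm
      obtain ⟨hab, hc⟩ := isCLM_clm hclm
      have : a = b := eq_of_forall_eq hc hab (Multiset.replicate d 0)
        (fun i X _ _ hX => Multiset.eq_replicate.mpr
          ⟨hc.1 i X hX, fun x _ => Subsingleton.elim x 0⟩)
      omega
    · -- n = 2
      intro a b L hclm
      obtain ⟨hab, hc⟩ := isCLM_clm hclm
      have := n2_bound hc hab
      omega
    · -- n = 3
      intro a b L hclm
      obtain ⟨hab, hc⟩ := isCLM_clm hclm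
      have := n3_bound d a b L hc hab
      omega
  · -- d ≤ 2
    interval_cases d
    · -- d = 0
      intro a b L hclm
      obtain ⟨hab, hc⟩ := isCLM_clm hclm
      have : a = b := eq_of_forall_eq hc hab 0
        (fun i X _ _ hX => Multiset.card_eq_zero.mp (hc.1 i X hX))
      omega
    · -- d = 1
      intro a b L hclm
      obtain ⟨hab, hc⟩ := isCLM_clm hclm
      obtain ⟨X, hX⟩ := hc.2.1 a le_rfl hab
      obtain ⟨x, hXx⟩ := Multiset.card_eq_one.mp (hc.1 a X hX)
      have hn1 : 0 < n := x.pos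
      have := d1_bound hc hab
      omega
    · -- d = 2
      intro a b L hclm
      obtain ⟨hab, hc⟩ := isCLM_clm hclm
      obtain ⟨X, hX⟩ := hc.2.1 a le_rfl hab
      have hcX := hc.1 a X hX
      obtain ⟨x, hx⟩ : ∃ x, x ∈ X := Multiset.exists_mem_of_ne_zero (by
        intro h0; rw [h0] at hcX; simp at hcX)
      have hn1 : 0 < n := x.pos
      have hb := d2_bound (b-a).toNat a b L hc hab le_rfl
      have h1 : 1 ≤ (Vf L a).card := Finset.card_pos.mpr ⟨x, mem_Vf.mpr ⟨X, hX, hx⟩⟩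
      have h2 : (Of L a b).card ≤ n := by
        have := Finset.card_le_univ (Of L a b)
        simpa using this
      omega

end CLMaux

/-- If `n ≤ 3` or `d ≤ 2`, then `H_clm(n,d) = (n−1)d` exactly. -/
theorem Hclm_small_cases (n d : ℕ) (h : n ≤ 3 ∨ d ≤ 2) :
    Hclm n d = (n - 1) * d := by
  classical
  have hub : ∀ l ∈ {l | ∃ (a b : ℤ) (L : ℤ → Set (Multiset (Fin n))),
      IsCLM n d a b L ∧ (b - a).toNat = l}, l ≤ (n - 1) * d := by
    rintro l ⟨a, b, L, hclm, rfl⟩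
    exact CLMaux.upper n d h a b L hclm
  rcases Nat.eq_zero_or_pos n with rfl | hn
  · rcases Nat.eq_zero_or_pos d with rfl | hd
    · -- n = 0, d = 0
      have hmem : 0 ∈ {l | ∃ (a b : ℤ) (L : ℤ → Set (Multiset (Fin 0))),
          IsCLM 0 0 a b L ∧ (b - a).toNat = l} :=
        ⟨0, 0, _, CLMaux.triv_isCLM 0, by simp⟩
      unfold Hclm
      refine le_antisymm (csSup_le ⟨0, hmem⟩ hub) ?_
      set_option linter.unnecessarySimpa false in
      simpa using le_csSup ⟨(0-1)*0, hub⟩ hmem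
    · -- n = 0, d ≥ 1 : no CLM at all
      have hempty : {l | ∃ (a b : ℤ) (L : ℤ → Set (Multiset (Fin 0))),
          IsCLM 0 d a b L ∧ (b - a).toNat = l} = ∅ := by
        rw [Set.eq_empty_iff_forall_notMem]
        rintro l ⟨a, b, L, hclm, rfl⟩
        obtain ⟨hab, hc⟩ := CLMaux.isCLM_clm hclm
        obtain ⟨X, hX⟩ := hc.2.1 a le_rfl hab
        have hcX := hc.1 a X hX
        obtain ⟨x, hx⟩ : ∃ x, x ∈ X := Multiset.exists_mem_of_ne_zero (by
          intro h0; rw [h0] at hcX; simp at hcX; omega)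
        exact (Nat.not_lt_zero _ x.isLt).elim
      unfold Hclm
      rw [hempty]
      simp
  · -- n ≥ 1 : sum construction
    have hmem : (n - 1) * d ∈ {l | ∃ (a b : ℤ) (L : ℤ → Set (Multiset (Fin n))),
        IsCLM n d a b L ∧ (b - a).toNat = l} :=
      ⟨0, ((n-1) * d : ℕ), CLMaux.sumL n d, CLMaux.sum_isCLM hn d, by
        rw [sub_zero]; exact Int.toNat_natCast _⟩
    unfold Hclm
    exact le_antisymm (csSup_le ⟨_, hmem⟩ hub) (le_csSup ⟨(n-1)*d, hub⟩ hmem)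
end
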